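/- arXiv:1301.0948 — 4 statements merged into one kernel-verified Lean document; each statement's English description precedes it below -/
import Mathlib

section
/- Let 𝒫 be a set of primes such that ∑_{p∈𝒫} p⁻¹ ≤ 1 + (1 − ∑_{p∈𝒫} p⁻²)^{1/2}. Then for every natural number k ≥ 1, the set ℕ_k(𝒫) is Erdős-best among primitive subsets of ℕ_{≥k}(𝒫): for every primitive set 𝒮 ⊆ ℕ_{≥k}(𝒫), ∑_{n∈𝒮} 1/(n log n) ≤ ∑_{n∈ℕ_k(𝒫)} 1/(n log n). -/
/-- A nonempty set of natural numbers is *primitive* if no element of the set divides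
another element of the set; the singleton set `{1}` is not considered primitive. -/
def Primitive (S : Set ℕ) : Prop :=
  S.Nonempty ∧ S ≠ {1} ∧ ∀ a ∈ S, ∀ b ∈ S, a ∣ b → a = b

/-- `NSet P` is the set `ℕ(P)` of natural numbers all of whose prime factors lie in `P`
(the multiplicative semigroup generated by `P`, which contains `1`). -/
def NSet (P : Set ℕ) : Set ℕ :=
  {n : ℕ | 0 < n ∧ ∀ p : ℕ, p.Prime → p ∣ n → p ∈ P}

/-- `NkSet P k = ℕ_k(P)`: the elements of `ℕ(P)` with exactly `k` prime factors
counted with multiplicity. -/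
def NkSet (P : Set ℕ) (k : ℕ) : Set ℕ :=
  {n ∈ NSet P | n.primeFactorsList.length = k}

/-- `NgeSet P k = ℕ_{≥k}(P)`: the elements of `ℕ(P)` with at least `k` prime factors
counted with multiplicity. -/
def NgeSet (P : Set ℕ) (k : ℕ) : Set ℕ :=
  {n ∈ NSet P | k ≤ n.primeFactorsList.length}


namespace BM

noncomputable section
open Finset Set MeasureTheory

/-- number of prime factors with multiplicity -/
def Om (n : ℕ) : ℕ := n.primeFactorsList.length

/-- the weight `n ^ (-t)` -/
def w (t : ℝ) (n : ℕ) : ℝ := (n : ℝ) ^ (-t)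

lemma Om_mul {a b : ℕ} (ha : a ≠ 0) (hb : b ≠ 0) : Om (a * b) = Om a + Om b := by
  unfold Om
  rw [(Nat.perm_primeFactorsList_mul ha hb).length_eq, List.length_append]

lemma Om_one : Om 1 = 0 := by simp [Om]

lemma Om_eq_zero {n : ℕ} (hn : n ≠ 0) (h : Om n = 0) : n = 1 := by
  unfold Om at h
  rcases (Nat.primeFactorsList_eq_nil n).1 (List.length_eq_zero_iff.1 h) with h | h
  · exact absurd h hn
  · exact h

lemma Om_prime {p : ℕ} (hp : p.Prime) : Om p = 1 := by
  simp [Om, Nat.primeFactorsList_prime hp]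

lemma prime_of_Om_one {n : ℕ} (hn : n ≠ 0) (h : Om n = 1) : n.Prime := by
  obtain ⟨p, hp⟩ := List.length_eq_one_iff.1 h
  have hpp : p.Prime := by
    have hmem : p ∈ n.primeFactorsList := by rw [hp]; simp
    exact Nat.prime_of_mem_primeFactorsList hmem
  have : n = p := by rw [← Nat.prod_primeFactorsList hn, hp, List.prod_singleton]
  rwa [this]

lemma Om_pos {n : ℕ} (hn : n ≠ 0) (h1 : n ≠ 1) : 0 < Om n :=
  Nat.pos_of_ne_zero fun h0 => h1 (Om_eq_zero hn h0)

lemma ne_one_of_Om_pos {n : ℕ} (h : 0 < Om n) : n ≠ 1 := by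
  rintro rfl; simp [Om_one] at h

lemma two_le_of_Om_pos {n : ℕ} (hn : n ≠ 0) (h : 0 < Om n) : 2 ≤ n := by
  rcases Nat.lt_or_ge n 2 with h2 | h2
  · interval_cases n
    · exact absurd rfl hn
    · simp [Om_one] at h
  · exact h2

lemma Om_lt_of_dvd {a b : ℕ} (hb : b ≠ 0) (h : a ∣ b) (hne : a ≠ b) : Om a < Om b := by
  obtain ⟨c, rfl⟩ := h
  have ha : a ≠ 0 := by rintro rfl; simp at hb
  have hc : c ≠ 0 := by rintro rfl; simp at hb
  have hc1 : c ≠ 1 := by rintro rfl; simp at hne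
  rw [Om_mul ha hc]
  have := Om_pos hc hc1
  omega

lemma NSet_dvd {P : Set ℕ} {n d : ℕ} (hn : n ∈ NSet P) (hd : d ∣ n) : d ∈ NSet P := by
  obtain ⟨hpos, hp⟩ := hn
  refine ⟨Nat.pos_of_ne_zero ?_, fun p pp pd => hp p pp (pd.trans hd)⟩
  rintro rfl
  rw [zero_dvd_iff] at hd
  omega

lemma w_nonneg (t : ℝ) (n : ℕ) : 0 ≤ w t n := Real.rpow_nonneg (Nat.cast_nonneg n) _

lemma w_pos (t : ℝ) {n : ℕ} (hn : 0 < n) : 0 < w t n :=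
  Real.rpow_pos_of_pos (by exact_mod_cast hn) _

lemma w_mul (t : ℝ) (a b : ℕ) : w t (a * b) = w t a * w t b := by
  unfold w
  push_cast
  exact Real.mul_rpow (Nat.cast_nonneg a) (Nat.cast_nonneg b)

lemma w_le_one {t : ℝ} (ht : 0 ≤ t) {n : ℕ} (hn : 1 ≤ n) : w t n ≤ 1 :=
  Real.rpow_le_one_of_one_le_of_nonpos (by exact_mod_cast hn) (by linarith)

lemma w_le_inv {t : ℝ} (ht : 1 ≤ t) {p : ℕ} (hp : 2 ≤ p) : w t p ≤ 1 / p := by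
  have h1 : (1 : ℝ) ≤ (p : ℝ) := by exact_mod_cast le_trans one_le_two hp
  have h := Real.rpow_le_rpow_of_exponent_le h1 (neg_le_neg ht)
  rw [Real.rpow_neg_one] at h
  simpa [w, one_div] using h

lemma w_one (t : ℝ) : w t 1 = 1 := by simp [w]


/-- the level-`L` divisor shadow of a finite set -/
def bd (B : Finset ℕ) (L : ℕ) : Finset ℕ :=
  (B.biUnion fun n => n.divisors).filter fun d => Om d = L

lemma mem_bd {B : Finset ℕ} {L d : ℕ} :
    d ∈ bd B L ↔ (∃ n ∈ B, d ∣ n ∧ n ≠ 0) ∧ Om d = L := by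
  simp [bd, Nat.mem_divisors]

lemma claimC_base {P : Set ℕ} {t : ℝ}
    (hK : ∀ D : Finset ℕ, (∀ p ∈ D, p.Prime ∧ p ∈ P) →
      (∑ p ∈ D, w t p) ^ 2 + ∑ p ∈ D, w t p ^ 2 ≤ 2 * ∑ p ∈ D, w t p)
    (B : Finset ℕ) (hB : ∀ n ∈ B, n ∈ NSet P ∧ Om n = 2) :
    ∑ n ∈ B, w t n ≤ ∑ d ∈ bd B 1, w t d := by
  classical
  set D := bd B 1 with hDdef
  have hfacts : ∀ n ∈ B, n ≠ 0 ∧ n.minFac.Prime ∧ (n / n.minFac).Prime ∧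
      n.minFac * (n / n.minFac) = n ∧ n.minFac ≤ n / n.minFac ∧
      n.minFac ∈ D ∧ n / n.minFac ∈ D := by
    intro n hn
    obtain ⟨hNS, hOm⟩ := hB n hn
    have hn0 : n ≠ 0 := hNS.1.ne'
    have hn1 : n ≠ 1 := by rintro rfl; simp [Om_one] at hOm
    have hp : n.minFac.Prime := Nat.minFac_prime hn1
    have hpd : n.minFac ∣ n := Nat.minFac_dvd n
    have hmul : n.minFac * (n / n.minFac) = n := Nat.mul_div_cancel' hpd
    have hq0 : n / n.minFac ≠ 0 := by
      intro h
      rw [h, mul_zero] at hmul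
      exact hn0 hmul.symm
    have hOmq : Om (n / n.minFac) = 1 := by
      have h2 := Om_mul hp.ne_zero hq0
      rw [hmul, hOm, Om_prime hp] at h2
      omega
    have hq : (n / n.minFac).Prime := prime_of_Om_one hq0 hOmq
    have hqd : n / n.minFac ∣ n := Nat.div_dvd_of_dvd hpd
    have hle : n.minFac ≤ n / n.minFac := Nat.minFac_le_of_dvd hq.two_le hqd
    exact ⟨hn0, hp, hq, hmul, hle,
      mem_bd.2 ⟨⟨n, hn, hpd, hn0⟩, Om_prime hp⟩,
      mem_bd.2 ⟨⟨n, hn, hqd, hn0⟩, Om_prime hq⟩⟩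
  have hDP : ∀ r ∈ D, r.Prime ∧ r ∈ P := by
    intro r hr
    obtain ⟨⟨n, hn, hdvd, hn0⟩, hOm⟩ := mem_bd.1 hr
    have hr0 : r ≠ 0 := by rintro rfl; rw [zero_dvd_iff] at hdvd; exact hn0 hdvd
    have hrp : r.Prime := prime_of_Om_one hr0 hOm
    exact ⟨hrp, (hB n hn).1.2 r hrp hdvd⟩
  set B₁ := B.filter (fun n => n.minFac = n / n.minFac) with hB₁
  set B₂ := B.filter (fun n => ¬ n.minFac = n / n.minFac) with hB₂
  have hB₁B : ∀ n ∈ B₁, n ∈ B := fun n hn => (Finset.mem_filter.1 hn).1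
  have hB₂B : ∀ n ∈ B₂, n ∈ B := fun n hn => (Finset.mem_filter.1 hn).1
  -- injectivity helpers
  have hinj : ∀ a ∈ B, ∀ b ∈ B, a.minFac = b.minFac → a / a.minFac = b / b.minFac → a = b := by
    intro a ha b hb h1 h2
    obtain ⟨_, _, _, hmula, _, _, _⟩ := hfacts a ha
    obtain ⟨_, _, _, hmulb, _, _, _⟩ := hfacts b hb
    have h3 : a.minFac * (a / a.minFac) = b.minFac * (b / b.minFac) := by rw [h2, h1]
    rw [hmula, hmulb] at h3
    exact h3
  -- squares bound
  have hsq : ∑ n ∈ B₁, w t n ≤ ∑ p ∈ D, w t p ^ 2 := by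
    have h1 : ∑ p ∈ B₁.image Nat.minFac, w t p ^ 2 = ∑ n ∈ B₁, w t n.minFac ^ 2 :=
      Finset.sum_image (fun a ha b hb hab =>
        hinj a (hB₁B a ha) b (hB₁B b hb) hab
          (by rw [← (Finset.mem_filter.1 ha).2, ← (Finset.mem_filter.1 hb).2, hab]))
    have h2 : ∑ n ∈ B₁, w t n = ∑ n ∈ B₁, w t n.minFac ^ 2 := by
      refine Finset.sum_congr rfl fun n hn => ?_
      obtain ⟨_, _, _, hmul, _, _, _⟩ := hfacts n (hB₁B n hn)
      conv_lhs => rw [← hmul]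
      rw [w_mul, ← (Finset.mem_filter.1 hn).2, sq]
    rw [h2, ← h1]
    refine Finset.sum_le_sum_of_subset_of_nonneg ?_ (fun p _ _ => sq_nonneg _)
    intro p hp
    obtain ⟨n, hn, rfl⟩ := Finset.mem_image.1 hp
    exact (hfacts n (hB₁B n hn)).2.2.2.2.2.1
  -- pair bounds
  have hDD : (∑ p ∈ D, w t p) ^ 2 = ∑ x ∈ D ×ˢ D, w t x.1 * w t x.2 := by
    rw [sq, Finset.sum_mul_sum, ← Finset.sum_product']
  set T₁ := B₂.image (fun n => (n.minFac, n / n.minFac)) with hT₁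
  set T₂ := B₂.image (fun n => (n / n.minFac, n.minFac)) with hT₂
  set T₃ := B₁.image (fun n => (n.minFac, n.minFac)) with hT₃
  have hT₁sum : ∑ x ∈ T₁, w t x.1 * w t x.2 = ∑ n ∈ B₂, w t n := by
    rw [Finset.sum_image (fun a ha b hb hab =>
      hinj a (hB₂B a ha) b (hB₂B b hb) (congrArg Prod.fst hab) (congrArg Prod.snd hab))]
    refine Finset.sum_congr rfl fun n hn => ?_
    obtain ⟨_, _, _, hmul, _, _, _⟩ := hfacts n (hB₂B n hn)
    conv_rhs => rw [← hmul]
    rw [w_mul]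
  have hT₂sum : ∑ x ∈ T₂, w t x.1 * w t x.2 = ∑ n ∈ B₂, w t n := by
    rw [Finset.sum_image (fun a ha b hb hab =>
      hinj a (hB₂B a ha) b (hB₂B b hb) (congrArg Prod.snd hab) (congrArg Prod.fst hab))]
    refine Finset.sum_congr rfl fun n hn => ?_
    obtain ⟨_, _, _, hmul, _, _, _⟩ := hfacts n (hB₂B n hn)
    conv_rhs => rw [← hmul]
    rw [w_mul, mul_comm]
  have hT₃sum : ∑ x ∈ T₃, w t x.1 * w t x.2 = ∑ n ∈ B₁, w t n := by
    rw [Finset.sum_image (fun a ha b hb hab => by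
      have h1 : a.minFac = b.minFac := (Prod.ext_iff.1 hab).1
      exact hinj a (hB₁B a ha) b (hB₁B b hb) h1
        (by rw [← (Finset.mem_filter.1 ha).2, ← (Finset.mem_filter.1 hb).2, h1]))]
    refine Finset.sum_congr rfl fun n hn => ?_
    obtain ⟨_, _, _, hmul, _, _, _⟩ := hfacts n (hB₁B n hn)
    show w t n.minFac * w t n.minFac = w t n
    conv_rhs => rw [← hmul]
    rw [w_mul, ← (Finset.mem_filter.1 hn).2]
  have hT₁lt : ∀ x ∈ T₁, x.1 < x.2 := by
    intro x hx
    obtain ⟨n, hn, rfl⟩ := Finset.mem_image.1 hx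
    obtain ⟨_, _, _, _, hle, _, _⟩ := hfacts n (hB₂B n hn)
    exact lt_of_le_of_ne hle (Finset.mem_filter.1 hn).2
  have hT₂lt : ∀ x ∈ T₂, x.2 < x.1 := by
    intro x hx
    obtain ⟨n, hn, rfl⟩ := Finset.mem_image.1 hx
    obtain ⟨_, _, _, _, hle, _, _⟩ := hfacts n (hB₂B n hn)
    exact lt_of_le_of_ne hle (Finset.mem_filter.1 hn).2
  have hT₃eq : ∀ x ∈ T₃, x.1 = x.2 := by
    intro x hx
    obtain ⟨n, hn, rfl⟩ := Finset.mem_image.1 hx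
    rfl
  have hd₁₂ : Disjoint T₁ T₂ := by
    rw [Finset.disjoint_left]
    intro x h1 h2
    exact absurd (hT₂lt x h2) (not_lt.2 (hT₁lt x h1).le)
  have hd₁₂₃ : Disjoint (T₁ ∪ T₂) T₃ := by
    rw [Finset.disjoint_left]
    intro x h1 h3
    rcases Finset.mem_union.1 h1 with h | h
    · exact absurd (hT₃eq x h3) (hT₁lt x h).ne
    · exact absurd (hT₃eq x h3).symm (hT₂lt x h).ne
  have hsubset : T₁ ∪ T₂ ∪ T₃ ⊆ D ×ˢ D := by
    intro x hx
    rw [Finset.mem_product]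
    rcases Finset.mem_union.1 hx with hx | hx
    · rcases Finset.mem_union.1 hx with hx | hx
      · obtain ⟨n, hn, rfl⟩ := Finset.mem_image.1 hx
        obtain ⟨_, _, _, _, _, hm1, hm2⟩ := hfacts n (hB₂B n hn)
        exact ⟨hm1, hm2⟩
      · obtain ⟨n, hn, rfl⟩ := Finset.mem_image.1 hx
        obtain ⟨_, _, _, _, _, hm1, hm2⟩ := hfacts n (hB₂B n hn)
        exact ⟨hm2, hm1⟩
    · obtain ⟨n, hn, rfl⟩ := Finset.mem_image.1 hx
      obtain ⟨_, _, _, _, _, hm1, hm2⟩ := hfacts n (hB₁B n hn)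
      exact ⟨hm1, hm1⟩
  have htri : ∑ n ∈ B₂, w t n + ∑ n ∈ B₂, w t n + ∑ n ∈ B₁, w t n ≤
      ∑ x ∈ D ×ˢ D, w t x.1 * w t x.2 := by
    have h1 : ∑ x ∈ T₁ ∪ T₂ ∪ T₃, w t x.1 * w t x.2 =
        ∑ n ∈ B₂, w t n + ∑ n ∈ B₂, w t n + ∑ n ∈ B₁, w t n := by
      rw [Finset.sum_union hd₁₂₃, Finset.sum_union hd₁₂, hT₁sum, hT₂sum, hT₃sum]
    rw [← h1]
    exact Finset.sum_le_sum_of_subset_of_nonneg hsubset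
      (fun x _ _ => mul_nonneg (w_nonneg t _) (w_nonneg t _))
  have hsplit : ∑ n ∈ B₁, w t n + ∑ n ∈ B₂, w t n = ∑ n ∈ B, w t n :=
    Finset.sum_filter_add_sum_filter_not B _ _
  have hKD := hK D hDP
  rw [hDD] at hKD
  linarith

lemma claimC {P : Set ℕ} {t : ℝ}
    (hK : ∀ D : Finset ℕ, (∀ p ∈ D, p.Prime ∧ p ∈ P) →
      (∑ p ∈ D, w t p) ^ 2 + ∑ p ∈ D, w t p ^ 2 ≤ 2 * ∑ p ∈ D, w t p) :
    ∀ L : ℕ, 1 ≤ L → ∀ B : Finset ℕ, (∀ n ∈ B, n ∈ NSet P ∧ Om n = L + 1) →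
      ∑ n ∈ B, w t n ≤ ∑ d ∈ bd B L, w t d := by
  intro L
  induction L with
  | zero => omega
  | succ L ih =>
    intro _ B hB
    rcases Nat.eq_zero_or_pos L with rfl | hL
    · exact claimC_base hK B hB
    · classical
      set Q := B.image Nat.minFac with hQdef
      have hfacts : ∀ n ∈ B, n ≠ 0 ∧ n.minFac.Prime ∧ n.minFac * (n / n.minFac) = n ∧
          (n / n.minFac) ∈ NSet P ∧ Om (n / n.minFac) = L + 1 := by
        intro n hn
        obtain ⟨hNS, hOm⟩ := hB n hn
        have hn0 : n ≠ 0 := hNS.1.ne'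
        have hn1 : n ≠ 1 := by rintro rfl; simp [Om_one] at hOm
        have hp : n.minFac.Prime := Nat.minFac_prime hn1
        have hpd := Nat.minFac_dvd n
        have hmul : n.minFac * (n / n.minFac) = n := Nat.mul_div_cancel' hpd
        have hq0 : n / n.minFac ≠ 0 := by
          intro h
          rw [h, mul_zero] at hmul
          exact hn0 hmul.symm
        have hOmq : Om (n / n.minFac) = L + 1 := by
          have h2 := Om_mul hp.ne_zero hq0
          rw [hmul, hOm, Om_prime hp] at h2
          omega
        exact ⟨hn0, hp, hmul, NSet_dvd hNS (Nat.div_dvd_of_dvd hpd), hOmq⟩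
      set F : ℕ → Finset ℕ :=
        fun p => (B.filter fun n => n.minFac = p).image fun n => n / n.minFac with hFdef
      set G : ℕ → Finset ℕ := fun p => (bd (F p) L).image fun x => p * x with hGdef
      have hQp : ∀ p ∈ Q, p.Prime := by
        intro p hp
        obtain ⟨n, hn, rfl⟩ := Finset.mem_image.1 hp
        exact (hfacts n hn).2.1
      have hmemF : ∀ p, ∀ m ∈ F p, m ∈ NSet P ∧ Om m = L + 1 := by
        intro p m hm
        obtain ⟨n, hn, rfl⟩ := Finset.mem_image.1 hm
        obtain ⟨hnB, _⟩ := Finset.mem_filter.1 hn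
        exact ⟨(hfacts n hnB).2.2.2.1, (hfacts n hnB).2.2.2.2⟩
      -- key step facts about elements of `bd (F p) L`
      have hxfact : ∀ p, ∀ x ∈ bd (F p) L, x ≠ 0 ∧ Om x = L ∧
          ∃ n ∈ B, n.minFac = p ∧ x ∣ n / n.minFac ∧ x ∣ n ∧ n ≠ 0 := by
        intro p x hx
        obtain ⟨⟨m, hm, hxm, hm0⟩, hOmx⟩ := mem_bd.1 hx
        obtain ⟨n, hn, rfl⟩ := Finset.mem_image.1 hm
        obtain ⟨hnB, hfix⟩ := Finset.mem_filter.1 hn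
        have hx0 : x ≠ 0 := by
          rintro rfl
          rw [zero_dvd_iff] at hxm
          exact hm0 hxm
        exact ⟨hx0, hOmx, n, hnB, hfix, hxm,
          hxm.trans (Nat.div_dvd_of_dvd (Nat.minFac_dvd n)), (hfacts n hnB).1⟩
      have hGsub : ∀ p ∈ Q, ∀ y ∈ G p, y ∈ bd B (L + 1) := by
        intro p hpQ y hy
        obtain ⟨x, hx, rfl⟩ := Finset.mem_image.1 hy
        obtain ⟨hx0, hOmx, n, hnB, hfix, hxd, hxn, hn0⟩ := hxfact p x hx
        have hpp : p.Prime := hQp p hpQ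
        refine mem_bd.2 ⟨⟨n, hnB, ?_, hn0⟩, ?_⟩
        · have h1 : p * x ∣ p * (n / n.minFac) := mul_dvd_mul_left p hxd
          have h2 : p * (n / n.minFac) = n := by
            rw [← hfix]
            exact Nat.mul_div_cancel' (Nat.minFac_dvd n)
          rwa [h2] at h1
        · rw [Om_mul hpp.ne_zero hx0, Om_prime hpp, hOmx]
          omega
      have hdisj : (↑Q : Set ℕ).PairwiseDisjoint G := by
        intro p hp p' hp' hne
        simp only [Function.onFun]
        rw [Finset.disjoint_left]
        intro y hy hy'
        obtain ⟨x, hx, hyx⟩ := Finset.mem_image.1 hy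
        obtain ⟨x', hx', hyx'⟩ := Finset.mem_image.1 hy'
        simp only [Finset.mem_coe] at hp hp'
        have hpp : p.Prime := hQp p hp
        have hpp' : p'.Prime := hQp p' hp'
        obtain ⟨hx0, _, n, hnB, hfix, _, hxn, hn0⟩ := hxfact p x hx
        obtain ⟨hx0', _, n', hnB', hfix', _, hxn', hn0'⟩ := hxfact p' x' hx'
        have heq : p * x = p' * x' := hyx.trans hyx'.symm
        have h1 : p ∣ p' * x' := ⟨x, heq.symm⟩
        have hple : p' ≤ p := by
          rcases (Nat.Prime.dvd_mul hpp).1 h1 with h | h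
          · exact absurd ((Nat.prime_dvd_prime_iff_eq hpp hpp').1 h) hne
          · have : p ∣ n' := h.trans hxn'
            rw [← hfix']
            exact Nat.minFac_le_of_dvd hpp.two_le this
        have h2 : p' ∣ p * x := ⟨x', heq⟩
        have hple' : p ≤ p' := by
          rcases (Nat.Prime.dvd_mul hpp').1 h2 with h | h
          · exact absurd ((Nat.prime_dvd_prime_iff_eq hpp' hpp).1 h).symm hne
          · have : p' ∣ n := h.trans hxn
            rw [← hfix]
            exact Nat.minFac_le_of_dvd hpp'.two_le this
        exact hne (le_antisymm hple' hple)
      -- now the computation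
      have hfiber : ∑ n ∈ B, w t n =
          ∑ p ∈ Q, ∑ n ∈ B.filter (fun n => n.minFac = p), w t n :=
        (Finset.sum_fiberwise_of_maps_to (fun n hn => Finset.mem_image_of_mem _ hn) _).symm
      have hinner : ∀ p ∈ Q, ∑ n ∈ B.filter (fun n => n.minFac = p), w t n =
          ∑ m ∈ F p, w t p * w t m := by
        intro p hpQ
        rw [hFdef]
        rw [Finset.sum_image (fun a ha b hb hab => by
          obtain ⟨haB, hfa⟩ := Finset.mem_filter.1 ha
          obtain ⟨hbB, hfb⟩ := Finset.mem_filter.1 hb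
          have hmula := (hfacts a haB).2.2.1
          have hmulb := (hfacts b hbB).2.2.1
          have h3 : a.minFac * (a / a.minFac) = b.minFac * (b / b.minFac) := by
            rw [hab, hfa, hfb]
          rw [hmula, hmulb] at h3
          exact h3)]
        refine Finset.sum_congr rfl fun n hn => ?_
        obtain ⟨hnB, hfix⟩ := Finset.mem_filter.1 hn
        rw [← hfix, ← w_mul, (hfacts n hnB).2.2.1]
      calc ∑ n ∈ B, w t n
          = ∑ p ∈ Q, ∑ m ∈ F p, w t p * w t m := by
            rw [hfiber]; exact Finset.sum_congr rfl hinner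
        _ = ∑ p ∈ Q, w t p * ∑ m ∈ F p, w t m := by
            refine Finset.sum_congr rfl fun p _ => ?_
            rw [Finset.mul_sum]
        _ ≤ ∑ p ∈ Q, w t p * ∑ x ∈ bd (F p) L, w t x := by
            refine Finset.sum_le_sum fun p hp => ?_
            exact mul_le_mul_of_nonneg_left (ih hL (F p) (hmemF p)) (w_nonneg t p)
        _ = ∑ p ∈ Q, ∑ y ∈ G p, w t y := by
            refine Finset.sum_congr rfl fun p hp => ?_
            rw [hGdef]
            rw [Finset.sum_image (fun a _ b _ hab =>
              Nat.eq_of_mul_eq_mul_left (hQp p hp).pos hab)]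
            rw [Finset.mul_sum]
            exact Finset.sum_congr rfl fun x _ => (w_mul t p x).symm
        _ = ∑ y ∈ Q.biUnion G, w t y := (Finset.sum_biUnion hdisj).symm
        _ ≤ ∑ d ∈ bd B (L + 1), w t d := by
            refine Finset.sum_le_sum_of_subset_of_nonneg ?_ (fun d _ _ => w_nonneg t d)
            intro y hy
            obtain ⟨p, hp, hyp⟩ := Finset.mem_biUnion.1 hy
            exact hGsub p hp y hyp


lemma merge {P : Set ℕ} {t : ℝ} {k : ℕ} (hk : 1 ≤ k)
    (hK : ∀ D : Finset ℕ, (∀ p ∈ D, p.Prime ∧ p ∈ P) →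
      (∑ p ∈ D, w t p) ^ 2 + ∑ p ∈ D, w t p ^ 2 ≤ 2 * ∑ p ∈ D, w t p) :
    ∀ M : ℕ, ∀ F : Finset ℕ,
      (∀ n ∈ F, n ∈ NSet P ∧ k ≤ Om n ∧ Om n ≤ k + M) →
      (∀ a ∈ F, ∀ b ∈ F, a ∣ b → a = b) →
      ∃ G : Finset ℕ, (∀ n ∈ G, n ∈ NSet P ∧ Om n = k) ∧
        ∑ n ∈ F, w t n ≤ ∑ n ∈ G, w t n := by
  intro M
  induction M with
  | zero =>
    intro F hF _
    refine ⟨F, fun n hn => ⟨(hF n hn).1, ?_⟩, le_refl _⟩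
    have := (hF n hn).2
    omega
  | succ M ih =>
    intro F hF hanti
    classical
    set F₂ := F.filter (fun n => Om n = k + M + 1) with hF₂def
    set F₁ := F.filter (fun n => ¬ Om n = k + M + 1) with hF₁def
    have hF₂lvl : ∀ n ∈ F₂, n ∈ NSet P ∧ Om n = (k + M) + 1 := by
      intro n hn
      obtain ⟨hnF, hOm⟩ := Finset.mem_filter.1 hn
      exact ⟨(hF n hnF).1, by omega⟩
    have hC := claimC hK (k + M) (by omega) F₂ hF₂lvl
    have hbd : ∀ d ∈ bd F₂ (k + M), d ∈ NSet P ∧ Om d = k + M ∧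
        ∃ n ∈ F, d ∣ n ∧ d ≠ n := by
      intro d hd
      obtain ⟨⟨n, hn, hdvd, hn0⟩, hOm⟩ := mem_bd.1 hd
      have hnF : n ∈ F := (Finset.mem_filter.1 hn).1
      have hOmn : Om n = k + M + 1 := (Finset.mem_filter.1 hn).2
      have hne : d ≠ n := by rintro rfl; omega
      exact ⟨NSet_dvd (hF n hnF).1 hdvd, hOm, n, hnF, hdvd, hne⟩
    have hdisj : Disjoint F₁ (bd F₂ (k + M)) := by
      rw [Finset.disjoint_left]
      intro d hd1 hd2
      obtain ⟨_, _, n, hnF, hdvd, hne⟩ := hbd d hd2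
      exact hne (hanti d (Finset.mem_filter.1 hd1).1 n hnF hdvd)
    set F' := F₁ ∪ bd F₂ (k + M) with hF'def
    have hF'mem : ∀ n ∈ F', n ∈ NSet P ∧ k ≤ Om n ∧ Om n ≤ k + M := by
      intro n hn
      rcases Finset.mem_union.1 hn with h | h
      · obtain ⟨hnF, hOm⟩ := Finset.mem_filter.1 h
        obtain ⟨h1, h2, h3⟩ := hF n hnF
        exact ⟨h1, h2, by omega⟩
      · obtain ⟨h1, h2, _⟩ := hbd n h
        exact ⟨h1, by omega, by omega⟩
    have hF'anti : ∀ a ∈ F', ∀ b ∈ F', a ∣ b → a = b := by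
      intro a ha b hb hab
      by_contra hne
      have hb0 : b ≠ 0 := ((hF'mem b hb).1).1.ne'
      have hlt : Om a < Om b := Om_lt_of_dvd hb0 hab hne
      rcases Finset.mem_union.1 ha with h | h
      · have haF : a ∈ F := (Finset.mem_filter.1 h).1
        rcases Finset.mem_union.1 hb with h' | h'
        · exact hne (hanti a haF b (Finset.mem_filter.1 h').1 hab)
        · obtain ⟨hbNS, hOmb, n, hnF, hdvd, hne'⟩ := hbd b h'
          have han : a = n := hanti a haF n hnF (hab.trans hdvd)
          subst han
          have hb_lt : Om b < Om a := Om_lt_of_dvd (((hF a hnF).1).1.ne') hdvd hne'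
          omega
      · have hOma : Om a = k + M := (hbd a h).2.1
        have hOmb : Om b ≤ k + M := (hF'mem b hb).2.2
        omega
    obtain ⟨G, hG, hle⟩ := ih F' hF'mem hF'anti
    refine ⟨G, hG, ?_⟩
    calc ∑ n ∈ F, w t n
        = ∑ n ∈ F₂, w t n + ∑ n ∈ F₁, w t n :=
          (Finset.sum_filter_add_sum_filter_not F _ _).symm
      _ ≤ ∑ n ∈ bd F₂ (k + M), w t n + ∑ n ∈ F₁, w t n := by linarith
      _ = ∑ n ∈ F', w t n := by rw [hF'def, Finset.sum_union hdisj]; ring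
      _ ≤ ∑ n ∈ G, w t n := hle


lemma sum_le_tsum_subtype {P : Set ℕ} (D : Finset ℕ) (hD : ∀ p ∈ D, p ∈ P)
    {f : ℕ → ℝ} (hf : ∀ p : P, 0 ≤ f p) (hsum : Summable fun p : P => f p) :
    ∑ p ∈ D, f p ≤ ∑' p : P, f p := by
  classical
  have h1 : ∑ x ∈ D.attach.image (fun x => (⟨x.1, hD x.1 x.2⟩ : P)), f x.1
      = ∑ p ∈ D, f p := by
    rw [Finset.sum_image (by intro a _ b _ hab; exact Subtype.ext (by simpa using hab))]
    exact Finset.sum_attach D f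
  rw [← h1]
  exact Summable.sum_le_tsum _ (fun i _ => hf i) hsum

lemma Kcond {P : Set ℕ} (hP : ∀ p ∈ P, Nat.Prime p)
    (hsummable : Summable fun p : P => (1 : ℝ) / (p : ℝ))
    (hineq : ∑' p : P, (1 : ℝ) / (p : ℝ) ≤
      1 + Real.sqrt (1 - ∑' p : P, (1 : ℝ) / ((p : ℝ) ^ 2)))
    {t : ℝ} (ht : 1 ≤ t) :
    ∀ D : Finset ℕ, (∀ p ∈ D, p.Prime ∧ p ∈ P) →
      (∑ p ∈ D, w t p) ^ 2 + ∑ p ∈ D, w t p ^ 2 ≤ 2 * ∑ p ∈ D, w t p := by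
  intro D hD
  set E := ∑' p : P, (1 : ℝ) / (p : ℝ) with hE
  set E₂ := ∑' p : P, (1 : ℝ) / ((p : ℝ) ^ 2) with hE₂
  have hp2 : ∀ p : P, (2 : ℝ) ≤ (p : ℝ) := by
    intro p
    exact_mod_cast (hP p p.2).two_le
  have hple : ∀ p : P, (1 : ℝ) / ((p : ℝ) ^ 2) ≤ 1 / (p : ℝ) := by
    intro p
    have h2 := hp2 p
    apply one_div_le_one_div_of_le (by linarith)
    nlinarith
  have hsum2 : Summable fun p : P => (1 : ℝ) / ((p : ℝ) ^ 2) :=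
    Summable.of_nonneg_of_le (fun p => by positivity) hple hsummable
  have hE2nonneg : 0 ≤ E₂ := tsum_nonneg fun p => by positivity
  have hEnonneg : 0 ≤ E := tsum_nonneg fun p => by positivity
  have hE2E : E₂ ≤ E := Summable.tsum_le_tsum hple hsum2 hsummable
  have hK1 : E ^ 2 + E₂ ≤ 2 * E := by
    rcases le_or_gt E 1 with h | h
    · nlinarith
    · have hs : 0 ≤ 1 - E₂ := by
        by_contra hneg
        push_neg at hneg
        rw [Real.sqrt_eq_zero'.2 (by linarith)] at hineq
        linarith
      have h2 := Real.sq_sqrt hs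
      nlinarith [Real.sqrt_nonneg (1 - E₂), sq_nonneg (E - 1 - Real.sqrt (1 - E₂))]
  set A := ∑ p ∈ D, w t p with hA
  set A2 := ∑ p ∈ D, w t p ^ 2 with hA2
  have hwle : ∀ p ∈ D, w t p ≤ 1 / (p : ℝ) := fun p hp => w_le_inv ht (hD p hp).1.two_le
  have hAE : A ≤ E := by
    calc A ≤ ∑ p ∈ D, 1 / (p : ℝ) := Finset.sum_le_sum hwle
      _ ≤ E := sum_le_tsum_subtype D (fun p hp => (hD p hp).2)
          (fun p => by positivity) hsummable
  have hA2E2 : A2 ≤ E₂ := by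
    have step : ∀ p ∈ D, w t p ^ 2 ≤ 1 / ((p : ℝ) ^ 2) := by
      intro p hp
      have h1 : w t p ^ 2 ≤ (1 / (p : ℝ)) ^ 2 :=
        pow_le_pow_left₀ (w_nonneg t p) (hwle p hp) 2
      rwa [div_pow, one_pow] at h1
    calc A2 ≤ ∑ p ∈ D, 1 / ((p : ℝ) ^ 2) := Finset.sum_le_sum step
      _ ≤ E₂ := sum_le_tsum_subtype D (fun p hp => (hD p hp).2)
          (fun p => by positivity) hsum2
  have hA2A : A2 ≤ A := by
    refine Finset.sum_le_sum fun p hp => ?_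
    have h0 := w_nonneg t p
    have h1 : w t p ≤ 1 := w_le_one (by linarith) (hD p hp).1.one_lt.le
    nlinarith
  have hA0 : 0 ≤ A := Finset.sum_nonneg fun p _ => w_nonneg t p
  rcases le_or_gt A 1 with h | h
  · nlinarith
  · nlinarith [mul_nonneg (sub_nonneg.2 hAE) (show (0:ℝ) ≤ E + A - 2 by linarith)]


open MeasureTheory in
lemma exp_integral {b : ℝ} (hb : 0 < b) :
    ∫⁻ s in Set.Ioi (1 : ℝ), ENNReal.ofReal (Real.exp (-(b * s))) =
      ENNReal.ofReal (Real.exp (-b) / b) := by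
  have hint : IntegrableOn (fun s : ℝ => Real.exp (-(b * s))) (Set.Ioi 1) := by
    have h := exp_neg_integrableOn_Ioi 1 hb
    simpa [neg_mul] using h
  rw [← ofReal_integral_eq_lintegral_ofReal hint
    (Filter.Eventually.of_forall fun x => (Real.exp_pos _).le)]
  congr 1
  have h1 : ∫ s in Set.Ioi (1 : ℝ), Real.exp (-(b * s)) =
      b⁻¹ • ∫ s in Set.Ioi (b * 1), Real.exp (-s) :=
    integral_comp_mul_left_Ioi (fun s => Real.exp (-s)) 1 hb
  rw [h1, integral_exp_neg_Ioi, mul_one, smul_eq_mul]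
  ring

open MeasureTheory in
lemma w_integral {n : ℕ} (hn : 2 ≤ n) :
    ∫⁻ s in Set.Ioi (1 : ℝ), ENNReal.ofReal (w s n) =
      ENNReal.ofReal (1 / (n * Real.log n)) := by
  have hn1 : (1 : ℝ) < n := by exact_mod_cast hn
  have hlog : 0 < Real.log n := Real.log_pos hn1
  have hw : ∀ s : ℝ, w s n = Real.exp (-(Real.log n * s)) := by
    intro s
    rw [w, Real.rpow_def_of_pos (by linarith), mul_neg]
  simp_rw [hw]
  rw [exp_integral hlog]
  congr 1
  rw [Real.exp_neg, Real.exp_log (by linarith)]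
  field_simp

lemma meas_w {n : ℕ} (hn : 0 < n) : Measurable fun s : ℝ => ENNReal.ofReal (w s n) := by
  apply Measurable.ennreal_ofReal
  have h : ∀ s : ℝ, w s n = Real.exp (Real.log n * -s) := by
    intro s
    rw [w, Real.rpow_def_of_pos (by exact_mod_cast hn)]
  simp_rw [h]
  exact Real.measurable_exp.comp (measurable_id.neg.const_mul (Real.log n))

lemma sum_le_tsum_set (A : Set ℕ) (G : Finset ℕ) (hG : ∀ n ∈ G, n ∈ A) (f : ℕ → ENNReal) :
    ∑ n ∈ G, f n ≤ ∑' x : A, f x := by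
  classical
  have h1 : ∑ x ∈ G.attach.image (fun x => (⟨x.1, hG x.1 x.2⟩ : A)), f x.1
      = ∑ n ∈ G, f n := by
    rw [Finset.sum_image (by intro a _ b _ hab; exact Subtype.ext (by simpa using hab))]
    exact Finset.sum_attach G f
  rw [← h1]
  exact ENNReal.sum_le_tsum _

lemma pointwise {P : Set ℕ} {k : ℕ} (hk : 1 ≤ k) {S : Set ℕ}
    (hS : S ⊆ NgeSet P k) (hanti : ∀ a ∈ S, ∀ b ∈ S, a ∣ b → a = b)
    {t : ℝ}
    (hK : ∀ D : Finset ℕ, (∀ p ∈ D, p.Prime ∧ p ∈ P) →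
      (∑ p ∈ D, w t p) ^ 2 + ∑ p ∈ D, w t p ^ 2 ≤ 2 * ∑ p ∈ D, w t p) :
    ∑' n : S, ENNReal.ofReal (w t n) ≤ ∑' n : NkSet P k, ENNReal.ofReal (w t n) := by
  classical
  rw [ENNReal.tsum_eq_iSup_sum]
  refine iSup_le fun F => ?_
  set F' : Finset ℕ := F.image Subtype.val with hF'def
  have hsum : ∑ x ∈ F, ENNReal.ofReal (w t x.1) = ∑ n ∈ F', ENNReal.ofReal (w t n) := by
    rw [hF'def, Finset.sum_image (fun a _ b _ hab => Subtype.ext hab)]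
  have hmem : ∀ n ∈ F', n ∈ S := by
    intro n hn
    obtain ⟨x, _, rfl⟩ := Finset.mem_image.1 hn
    exact x.2
  set M := F'.sup Om with hMdef
  have hFmem : ∀ n ∈ F', n ∈ NSet P ∧ k ≤ Om n ∧ Om n ≤ k + M := by
    intro n hn
    have h1 := hS (hmem n hn)
    have h2 : Om n ≤ M := Finset.le_sup (f := Om) hn
    exact ⟨h1.1, h1.2, by omega⟩
  obtain ⟨G, hG, hle⟩ := merge hk hK M F' hFmem
    (fun a ha b hb hab => hanti a (hmem a ha) b (hmem b hb) hab)
  rw [hsum]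
  calc ∑ n ∈ F', ENNReal.ofReal (w t n)
      = ENNReal.ofReal (∑ n ∈ F', w t n) :=
        (ENNReal.ofReal_sum_of_nonneg (fun i _ => w_nonneg t i)).symm
    _ ≤ ENNReal.ofReal (∑ n ∈ G, w t n) := ENNReal.ofReal_le_ofReal hle
    _ = ∑ n ∈ G, ENNReal.ofReal (w t n) :=
        ENNReal.ofReal_sum_of_nonneg (fun i _ => w_nonneg t i)
    _ ≤ ∑' n : NkSet P k, ENNReal.ofReal (w t n) :=
        sum_le_tsum_set (NkSet P k) G (fun n hn => ⟨(hG n hn).1, (hG n hn).2⟩) _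

lemma tsum_Nk_le {P : Set ℕ} {t : ℝ} (k : ℕ) :
    ∑' n : NkSet P k, ENNReal.ofReal (w t n) ≤
      (∑' p : P, ENNReal.ofReal (w t p)) ^ k := by
  induction k with
  | zero =>
    have hset : NkSet P 0 = {1} := by
      ext n
      constructor
      · rintro ⟨⟨hpos, _⟩, hlen⟩
        exact Om_eq_zero hpos.ne' hlen
      · rintro rfl
        exact ⟨⟨one_pos, fun p pp pd => absurd (Nat.dvd_one.1 pd) pp.ne_one⟩, Om_one⟩
    rw [hset]
    have h1 : ∑' (n : ↑({1} : Set ℕ)), ENNReal.ofReal (w t ↑n) = 1 := by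
      calc ∑' (n : ↑({1} : Set ℕ)), ENNReal.ofReal (w t ↑n)
          = ∑' (m : ℕ), ({1} : Set ℕ).indicator (fun m => ENNReal.ofReal (w t m)) m :=
            _root_.tsum_subtype ({1} : Set ℕ) (fun m => ENNReal.ofReal (w t m))
        _ = ENNReal.ofReal (w t 1) := by
            rw [tsum_eq_single 1 (by intro b hb; simp [Set.indicator, hb])]
            simp
        _ = 1 := by simp [w_one]
    rw [h1, pow_zero]
  | succ k ih =>
    have hfact : ∀ n : ℕ, n ∈ NkSet P (k + 1) → n.minFac ∈ P ∧
        (n / n.minFac) ∈ NkSet P k ∧ n.minFac * (n / n.minFac) = n := by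
      intro n hn
      obtain ⟨hNS, hlen⟩ := hn
      have hOmn : Om n = k + 1 := hlen
      have hn0 : n ≠ 0 := hNS.1.ne'
      have hn1 : n ≠ 1 := ne_one_of_Om_pos (by omega)
      have hp : n.minFac.Prime := Nat.minFac_prime hn1
      have hpd := Nat.minFac_dvd n
      have hmul : n.minFac * (n / n.minFac) = n := Nat.mul_div_cancel' hpd
      have hq0 : n / n.minFac ≠ 0 := by
        intro h
        rw [h, mul_zero] at hmul
        exact hn0 hmul.symm
      have hOmq : Om (n / n.minFac) = k := by
        have h2 := Om_mul hp.ne_zero hq0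
        rw [hmul, hOmn, Om_prime hp] at h2
        omega
      exact ⟨hNS.2 n.minFac hp hpd,
        ⟨NSet_dvd hNS (Nat.div_dvd_of_dvd hpd), hOmq⟩, hmul⟩
    set e : ↥(NkSet P (k + 1)) → ↥P × ↥(NkSet P k) := fun x =>
      (⟨x.1.minFac, (hfact x.1 x.2).1⟩, ⟨x.1 / x.1.minFac, (hfact x.1 x.2).2.1⟩) with hedef
    have hinj : Function.Injective e := by
      intro a b hab
      have h1 : a.1.minFac = b.1.minFac := by
        have := (Prod.ext_iff.1 hab).1
        exact Subtype.ext_iff.1 this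
      have h2 : a.1 / a.1.minFac = b.1 / b.1.minFac := by
        have := (Prod.ext_iff.1 hab).2
        exact Subtype.ext_iff.1 this
      have h3 : a.1.minFac * (a.1 / a.1.minFac) = b.1.minFac * (b.1 / b.1.minFac) := by
        rw [h2, h1]
      rw [(hfact a.1 a.2).2.2, (hfact b.1 b.2).2.2] at h3
      exact Subtype.ext h3
    have hstep : ∑' n : NkSet P (k + 1), ENNReal.ofReal (w t n) ≤
        ∑' y : ↥P × ↥(NkSet P k), ENNReal.ofReal (w t y.1.1) * ENNReal.ofReal (w t y.2.1) := by
      refine Summable.tsum_le_tsum_of_inj e hinj (fun _ _ => zero_le') (fun x => ?_)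
        ENNReal.summable ENNReal.summable
      have h1 : (x.1 : ℕ) = x.1.minFac * (x.1 / x.1.minFac) := ((hfact x.1 x.2).2.2).symm
      rw [hedef]
      simp only []
      conv_lhs => rw [h1]
      rw [w_mul, ENNReal.ofReal_mul (w_nonneg t _)]
    refine le_trans hstep ?_
    rw [ENNReal.tsum_prod']
    calc ∑' (a : ↥P) (b : ↥(NkSet P k)), ENNReal.ofReal (w t a.1) * ENNReal.ofReal (w t b.1)
        = ∑' (a : ↥P), ENNReal.ofReal (w t a.1) *
            ∑' (b : ↥(NkSet P k)), ENNReal.ofReal (w t b.1) := by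
          exact tsum_congr fun a => ENNReal.tsum_mul_left
      _ = (∑' (a : ↥P), ENNReal.ofReal (w t a.1)) *
            ∑' (b : ↥(NkSet P k)), ENNReal.ofReal (w t b.1) := ENNReal.tsum_mul_right
      _ ≤ (∑' (a : ↥P), ENNReal.ofReal (w t a.1)) *
            (∑' p : P, ENNReal.ofReal (w t p)) ^ k := mul_le_mul_right ih _
      _ = (∑' p : P, ENNReal.ofReal (w t p)) ^ (k + 1) := by
          rw [pow_succ, mul_comm]


open MeasureTheory in
lemma main_ineq {P : Set ℕ} (hP : ∀ p ∈ P, Nat.Prime p)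
    (hsummable : Summable fun p : P => (1 : ℝ) / (p : ℝ))
    (hineq : ∑' p : P, (1 : ℝ) / (p : ℝ) ≤
      1 + Real.sqrt (1 - ∑' p : P, (1 : ℝ) / ((p : ℝ) ^ 2)))
    (k : ℕ) (hk : 1 ≤ k)
    (S : Set ℕ) (hS : S ⊆ NgeSet P k) (hanti : ∀ a ∈ S, ∀ b ∈ S, a ∣ b → a = b) :
    ∑' n : S, 1 / ((n : ℝ) * Real.log n) ≤
      ∑' n : NkSet P k, 1 / ((n : ℝ) * Real.log n) := by
  classical
  set f : ℕ → ℝ := fun n => 1 / ((n : ℝ) * Real.log n) with hfdef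
  have hf0 : ∀ n : ℕ, 0 ≤ f n := fun n =>
    div_nonneg zero_le_one (mul_nonneg (Nat.cast_nonneg n) (Real.log_natCast_nonneg n))
  have hS2 : ∀ n : ↥S, 2 ≤ (n : ℕ) := by
    intro n
    have h1 := hS n.2
    exact two_le_of_Om_pos h1.1.1.ne' (by have h2 : k ≤ Om ↑n := h1.2; omega)
  have hNk2 : ∀ n : ↥(NkSet P k), 2 ≤ (n : ℕ) := by
    intro n
    have h1 := n.2
    exact two_le_of_Om_pos h1.1.1.ne' (by have : Om ↑n = k := h1.2; omega)
  have hposS : ∀ n : ↥S, 0 < (n : ℕ) := fun n => lt_of_lt_of_le two_pos (hS2 n)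
  have hposNk : ∀ n : ↥(NkSet P k), 0 < (n : ℕ) := fun n => lt_of_lt_of_le two_pos (hNk2 n)
  -- integral representations
  have hswapS : ∑' n : ↥S, ENNReal.ofReal (f ↑n) =
      ∫⁻ s in Set.Ioi (1 : ℝ), ∑' n : ↥S, ENNReal.ofReal (w s ↑n) := by
    rw [lintegral_tsum (fun n => (meas_w (hposS n)).aemeasurable)]
    exact tsum_congr fun n => (w_integral (hS2 n)).symm
  have hswapNk : ∑' n : ↥(NkSet P k), ENNReal.ofReal (f ↑n) =
      ∫⁻ s in Set.Ioi (1 : ℝ), ∑' n : ↥(NkSet P k), ENNReal.ofReal (w s ↑n) := by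
    rw [lintegral_tsum (fun n => (meas_w (hposNk n)).aemeasurable)]
    exact tsum_congr fun n => (w_integral (hNk2 n)).symm
  -- pointwise comparison
  have hmono : ∫⁻ s in Set.Ioi (1 : ℝ), ∑' n : ↥S, ENNReal.ofReal (w s ↑n) ≤
      ∫⁻ s in Set.Ioi (1 : ℝ), ∑' n : ↥(NkSet P k), ENNReal.ofReal (w s ↑n) := by
    refine lintegral_mono_ae ?_
    rw [ae_restrict_iff' measurableSet_Ioi]
    refine Filter.Eventually.of_forall fun s hs => ?_
    exact pointwise hk hS hanti (Kcond hP hsummable hineq (le_of_lt hs))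
  -- bound on the prime sum
  have hE2nonneg : 0 ≤ ∑' p : P, (1 : ℝ) / ((p : ℝ) ^ 2) := tsum_nonneg fun p => by positivity
  have hEle2 : ∑' p : P, (1 : ℝ) / (p : ℝ) ≤ 2 := by
    have h1 : Real.sqrt (1 - ∑' p : P, (1 : ℝ) / ((p : ℝ) ^ 2)) ≤ 1 := by
      calc Real.sqrt (1 - ∑' p : P, (1 : ℝ) / ((p : ℝ) ^ 2)) ≤ Real.sqrt 1 :=
            Real.sqrt_le_sqrt (by linarith)
        _ = 1 := Real.sqrt_one
    linarith
  have hEt : ∀ s : ℝ, 1 ≤ s → ∑' p : ↥P, ENNReal.ofReal (w s ↑p) ≤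
      ENNReal.ofReal ((2 : ℝ) ^ ((1 : ℝ) - s) * 2) := by
    intro s hs1
    have h20 : (0 : ℝ) < 2 := two_pos
    have hwb : ∀ p : ↥P, w s ↑p ≤ (2 : ℝ) ^ ((1 : ℝ) - s) * (1 / (p : ℝ)) := by
      intro p
      have hp2 : (2 : ℝ) ≤ ((p : ℕ) : ℝ) := by exact_mod_cast (hP p p.2).two_le
      have hp0 : (0 : ℝ) < ((p : ℕ) : ℝ) := by linarith
      have h1 : w s (p : ℕ) = ((p : ℕ) : ℝ) ^ ((1 : ℝ) - s) * ((p : ℕ) : ℝ) ^ (-(1 : ℝ)) := by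
        rw [w, ← Real.rpow_add hp0]
        congr 1
        ring
      have e1 : ((p : ℕ) : ℝ) ^ ((1 : ℝ) - s) = (((p : ℕ) : ℝ) ^ (s - 1))⁻¹ := by
        rw [← Real.rpow_neg hp0.le]
        congr 1
        ring
      have e2 : (2 : ℝ) ^ ((1 : ℝ) - s) = ((2 : ℝ) ^ (s - 1))⁻¹ := by
        rw [← Real.rpow_neg h20.le]
        congr 1
        ring
      have h2 : ((p : ℕ) : ℝ) ^ ((1 : ℝ) - s) ≤ (2 : ℝ) ^ ((1 : ℝ) - s) := by
        rw [e1, e2]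
        refine inv_anti₀ (Real.rpow_pos_of_pos h20 _) ?_
        exact Real.rpow_le_rpow h20.le hp2 (by linarith)
      rw [h1, Real.rpow_neg_one]
      rw [one_div]
      exact mul_le_mul_of_nonneg_right h2 (inv_nonneg.2 hp0.le)
    calc ∑' p : ↥P, ENNReal.ofReal (w s ↑p)
        ≤ ∑' p : ↥P, ENNReal.ofReal ((2 : ℝ) ^ ((1 : ℝ) - s) * (1 / (p : ℝ))) :=
          ENNReal.tsum_le_tsum fun p => ENNReal.ofReal_le_ofReal (hwb p)
      _ = ENNReal.ofReal ((2 : ℝ) ^ ((1 : ℝ) - s)) * ∑' p : ↥P, ENNReal.ofReal (1 / (p : ℝ)) := by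
          simp_rw [ENNReal.ofReal_mul (Real.rpow_nonneg h20.le _)]
          exact ENNReal.tsum_mul_left
      _ ≤ ENNReal.ofReal ((2 : ℝ) ^ ((1 : ℝ) - s)) * ENNReal.ofReal 2 := by
          refine mul_le_mul_right ?_ _
          rw [← ENNReal.ofReal_tsum_of_nonneg (fun p => by positivity) hsummable]
          exact ENNReal.ofReal_le_ofReal hEle2
      _ = ENNReal.ofReal ((2 : ℝ) ^ ((1 : ℝ) - s) * 2) :=
          (ENNReal.ofReal_mul (Real.rpow_nonneg h20.le _)).symm
  -- finiteness of the right-hand side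
  have hb : (0 : ℝ) < (k : ℝ) * Real.log 2 := by
    have h1 : (0 : ℝ) < Real.log 2 := Real.log_pos one_lt_two
    have h2 : (0 : ℝ) < (k : ℝ) := by exact_mod_cast hk
    positivity
  have hBfin : ∑' n : ↥(NkSet P k), ENNReal.ofReal (f ↑n) ≠ ⊤ := by
    rw [hswapNk]
    have hbound : ∫⁻ s in Set.Ioi (1 : ℝ), ∑' n : ↥(NkSet P k), ENNReal.ofReal (w s ↑n) ≤
        ∫⁻ s in Set.Ioi (1 : ℝ), ENNReal.ofReal
          ((2 : ℝ) ^ k * Real.exp ((k : ℝ) * Real.log 2) *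
            Real.exp (-((k : ℝ) * Real.log 2 * s))) := by
      refine lintegral_mono_ae ?_
      rw [ae_restrict_iff' measurableSet_Ioi]
      refine Filter.Eventually.of_forall fun s hs => ?_
      have h1 : ∑' n : ↥(NkSet P k), ENNReal.ofReal (w s ↑n) ≤
          ENNReal.ofReal ((2 : ℝ) ^ ((1 : ℝ) - s) * 2) ^ k :=
        le_trans (tsum_Nk_le k) (pow_le_pow_left' (hEt s (le_of_lt hs)) k)
      refine le_trans h1 ?_
      rw [← ENNReal.ofReal_pow (by positivity)]
      refine ENNReal.ofReal_le_ofReal (le_of_eq ?_)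
      have e1 : (2 : ℝ) ^ ((1 : ℝ) - s) = Real.exp (Real.log 2 * (1 - s)) :=
        Real.rpow_def_of_pos two_pos _
      rw [e1, mul_pow, ← Real.exp_nat_mul]
      rw [show (k : ℝ) * (Real.log 2 * (1 - s)) =
        (k : ℝ) * Real.log 2 + -((k : ℝ) * Real.log 2 * s) by ring]
      rw [Real.exp_add]
      ring
    refine ne_top_of_le_ne_top ?_ hbound
    have heq : (fun s : ℝ => ENNReal.ofReal ((2 : ℝ) ^ k * Real.exp ((k : ℝ) * Real.log 2) *
        Real.exp (-((k : ℝ) * Real.log 2 * s)))) =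
        fun s : ℝ => ENNReal.ofReal ((2 : ℝ) ^ k * Real.exp ((k : ℝ) * Real.log 2)) *
          ENNReal.ofReal (Real.exp (-((k : ℝ) * Real.log 2 * s))) :=
      funext fun s => ENNReal.ofReal_mul (by positivity)
    rw [heq, lintegral_const_mul' _ _ ENNReal.ofReal_ne_top, exp_integral hb]
    exact ENNReal.mul_ne_top ENNReal.ofReal_ne_top ENNReal.ofReal_ne_top
  -- conclusion
  have hAB : ∑' n : ↥S, ENNReal.ofReal (f ↑n) ≤ ∑' n : ↥(NkSet P k), ENNReal.ofReal (f ↑n) := by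
    rw [hswapS, hswapNk]
    exact hmono
  by_cases hsumS : Summable fun n : ↥S => f ↑n
  · have h1 : ENNReal.ofReal (∑' n : ↥S, f ↑n) = ∑' n : ↥S, ENNReal.ofReal (f ↑n) :=
      ENNReal.ofReal_tsum_of_nonneg (fun n => hf0 _) hsumS
    have hsumNk : Summable fun n : ↥(NkSet P k) => f ↑n := by
      have h2 := ENNReal.summable_toReal hBfin
      refine h2.congr fun n => ?_
      exact ENNReal.toReal_ofReal (hf0 _)
    have h2 : ENNReal.ofReal (∑' n : ↥(NkSet P k), f ↑n) =
        ∑' n : ↥(NkSet P k), ENNReal.ofReal (f ↑n) :=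
      ENNReal.ofReal_tsum_of_nonneg (fun n => hf0 _) hsumNk
    rw [← ENNReal.ofReal_le_ofReal_iff (tsum_nonneg fun n => hf0 _), h1, h2]
    exact hAB
  · rw [tsum_eq_zero_of_not_summable hsumS]
    exact tsum_nonneg fun n => hf0 _

end
end BM

/-- **Theorem 5 (Banks–Martin).** If `P` is a set of primes with
`∑_{p∈P} p⁻¹ ≤ 1 + (1 - ∑_{p∈P} p⁻²)^{1/2}`, then for every `k ≥ 1` the set `ℕ_k(P)`
is Erdős-best among primitive subsets of `ℕ_{≥k}(P)`. -/
theorem Nk_Erdos_best (P : Set ℕ) (hP : ∀ p ∈ P, Nat.Prime p)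
    (hsummable : Summable fun p : P => (1 : ℝ) / (p : ℝ))
    (hineq : ∑' p : P, (1 : ℝ) / (p : ℝ) ≤
      1 + Real.sqrt (1 - ∑' p : P, (1 : ℝ) / ((p : ℝ) ^ 2)))
    (k : ℕ) (hk : 1 ≤ k)
    (S : Set ℕ) (hS : S ⊆ NgeSet P k) (hprim : Primitive S) :
    ∑' n : S, 1 / ((n : ℝ) * Real.log n) ≤
      ∑' n : NkSet P k, 1 / ((n : ℝ) * Real.log n) := by
  exact BM.main_ineq hP hsummable hineq k hk S hS hprim.2.2
end

section
/- Let t > 1 be a real number such that ∑_{p prime} p^{−t} ≤ 1 + (1 − ∑_{p prime} p^{−2t})^{1/2}. Then every set of primes 𝒫 is t-best among primitive subsets of ℕ(𝒫): for every primitive set 𝒮 ⊆ ℕ(𝒫), ∑_{n∈𝒮} n^{−t} ≤ ∑_{p∈𝒫} p^{−t}. -/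
open Finset

namespace BM

noncomputable section
open scoped Classical

variable (w : ℕ → ℝ)

/-- product weight of a multiset -/
def pw (s : Multiset ℕ) : ℝ := (s.map w).prod

def s1 (R : Finset ℕ) : ℝ := ∑ p ∈ R, w p
def s2 (R : Finset ℕ) : ℝ := ∑ p ∈ R, (w p) ^ 2
def H2 (R : Finset ℕ) : ℝ := (s1 w R ^ 2 + s2 w R) / 2

variable {w}

lemma pw_nonneg (hw : ∀ n, 0 ≤ w n) (s : Multiset ℕ) : 0 ≤ pw w s := by
  apply Multiset.prod_nonneg
  intro a ha
  obtain ⟨b, _, rfl⟩ := Multiset.mem_map.1 ha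
  exact hw b

@[simp] lemma pw_zero : pw w 0 = 1 := by simp [pw]

@[simp] lemma pw_add (s t : Multiset ℕ) : pw w (s + t) = pw w s * pw w t := by
  simp [pw]

@[simp] lemma pw_singleton (p : ℕ) : pw w {p} = w p := by simp [pw]

@[simp] lemma pw_replicate (b q : ℕ) : pw w (Multiset.replicate b q) = w q ^ b := by
  simp [pw, Multiset.map_replicate, Multiset.prod_replicate]

lemma sum_pw_nonneg (hw : ∀ n, 0 ≤ w n) (A : Finset (Multiset ℕ)) :
    0 ≤ ∑ s ∈ A, pw w s :=
  Finset.sum_nonneg fun s _ => pw_nonneg hw s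

lemma s1_nonneg (hw : ∀ n, 0 ≤ w n) (R : Finset ℕ) : 0 ≤ s1 w R :=
  Finset.sum_nonneg fun p _ => hw p

lemma s1_mono (hw : ∀ n, 0 ≤ w n) {R T : Finset ℕ} (h : R ⊆ T) : s1 w R ≤ s1 w T :=
  Finset.sum_le_sum_of_subset_of_nonneg h fun p _ _ => hw p

lemma s2_mono (hw : ∀ n, 0 ≤ w n) {R T : Finset ℕ} (h : R ⊆ T) : s2 w R ≤ s2 w T :=
  Finset.sum_le_sum_of_subset_of_nonneg h fun p _ _ => sq_nonneg (w p)

lemma H2_mono (hw : ∀ n, 0 ≤ w n) {R T : Finset ℕ} (h : R ⊆ T) : H2 w R ≤ H2 w T := by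
  have h1 := s1_mono hw h
  have h2 := s2_mono hw h
  have h0 := s1_nonneg hw R
  unfold H2
  nlinarith

lemma H2_insert (hw : ∀ n, 0 ≤ w n) {q : ℕ} {T : Finset ℕ} (hq : q ∉ T) :
    H2 w (insert q T) = H2 w T + w q * s1 w T + w q ^ 2 := by
  unfold H2 s1 s2
  rw [Finset.sum_insert hq, Finset.sum_insert hq]
  ring

/-- recovery of a multiset from its `q`-count and `q`-free part -/
lemma replicate_add_filter (q : ℕ) (s : Multiset ℕ) :
    Multiset.replicate (s.count q) q + s.filter (· ≠ q) = s := by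
  simpa [Multiset.filter_eq', ne_eq] using Multiset.filter_add_not (· = q) s

lemma pw_count_filter (q : ℕ) (s : Multiset ℕ) :
    pw w s = w q ^ s.count q * pw w (s.filter (· ≠ q)) := by
  conv_lhs => rw [← replicate_add_filter q s]
  simp

lemma card_filter_ne (q : ℕ) (s : Multiset ℕ) :
    Multiset.card (s.filter (· ≠ q)) = Multiset.card s - s.count q := by
  conv_rhs => rw [← replicate_add_filter q s]
  simp

/-- the `q`-free parts of the elements of `A` having exactly `b` copies of `q` -/
def strat (A : Finset (Multiset ℕ)) (q : ℕ) (b : ℕ) : Finset (Multiset ℕ) :=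
  (A.filter (fun s => s.count q = b)).image (fun s => s.filter (· ≠ q))

lemma mem_strat {A : Finset (Multiset ℕ)} {q b : ℕ} {u : Multiset ℕ} :
    u ∈ strat A q b ↔ ∃ s ∈ A, s.count q = b ∧ s.filter (· ≠ q) = u := by
  simp [strat, Finset.mem_image, Finset.mem_filter, and_assoc]

lemma mem_strat_of {A : Finset (Multiset ℕ)} {q : ℕ} {s : Multiset ℕ} (hs : s ∈ A) :
    s.filter (· ≠ q) ∈ strat A q (s.count q) :=
  mem_strat.2 ⟨s, hs, rfl, rfl⟩

lemma sum_strat (A : Finset (Multiset ℕ)) (q b : ℕ) :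
    ∑ s ∈ A.filter (fun s => s.count q = b), pw w s
      = w q ^ b * ∑ u ∈ strat A q b, pw w u := by
  rw [strat, Finset.sum_image, Finset.mul_sum]
  · apply Finset.sum_congr rfl
    intro s hs
    rw [Finset.mem_filter] at hs
    rw [pw_count_filter q s, hs.2]
  · intro s hs t ht h
    rw [Finset.mem_coe, Finset.mem_filter] at hs ht
    have h1 := replicate_add_filter q s
    have h2 := replicate_add_filter q t
    rw [hs.2] at h1
    rw [ht.2] at h2
    rw [← h1, ← h2, show Multiset.filter (fun x => x ≠ q) s = Multiset.filter (fun x => x ≠ q) t from h]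

lemma sum_eq_sum_strat (A : Finset (Multiset ℕ)) (q n : ℕ)
    (hn : ∀ s ∈ A, s.count q < n) :
    ∑ s ∈ A, pw w s = ∑ b ∈ Finset.range n, w q ^ b * ∑ u ∈ strat A q b, pw w u := by
  rw [← Finset.sum_fiberwise_of_maps_to (g := fun s => Multiset.count q s)
    (t := Finset.range n) (fun s hs => Finset.mem_range.2 (hn s hs))]
  exact Finset.sum_congr rfl fun b _ => sum_strat A q b

end
end BM

namespace BM
noncomputable section
open scoped Classical
variable {w : ℕ → ℝ}

lemma strat_card {A : Finset (Multiset ℕ)} {q b c : ℕ}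
    (hA : ∀ s ∈ A, Multiset.card s = c) {u : Multiset ℕ} (hu : u ∈ strat A q b) :
    Multiset.card u = c - b := by
  obtain ⟨s, hs, hc, rfl⟩ := mem_strat.1 hu
  rw [card_filter_ne, hA s hs, hc]

lemma strat_entries {A : Finset (Multiset ℕ)} {q b : ℕ} {Q : Finset ℕ}
    (hA : ∀ s ∈ A, ∀ p ∈ s, p ∈ Q) {u : Multiset ℕ} (hu : u ∈ strat A q b) :
    ∀ p ∈ u, p ∈ Q.erase q := by
  obtain ⟨s, hs, hc, rfl⟩ := mem_strat.1 hu
  intro p hp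
  rw [Multiset.mem_filter] at hp
  exact Finset.mem_erase.2 ⟨hp.2, hA s hs p hp.1⟩

/-- bound for a set of distinct multisets of size 1 -/
lemma sum_card_one_le (hw : ∀ n, 0 ≤ w n) {A : Finset (Multiset ℕ)} {R : Finset ℕ}
    (hA : ∀ a ∈ A, Multiset.card a = 1 ∧ ∀ p ∈ a, p ∈ R) :
    ∑ a ∈ A, pw w a ≤ s1 w R := by
  have hsub : A ⊆ R.image (fun p => ({p} : Multiset ℕ)) := by
    intro a ha
    obtain ⟨p, rfl⟩ := Multiset.card_eq_one.1 (hA a ha).1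
    exact Finset.mem_image.2 ⟨p, (hA _ ha).2 p (Multiset.mem_singleton_self p), rfl⟩
  calc ∑ a ∈ A, pw w a ≤ ∑ a ∈ R.image (fun p => ({p} : Multiset ℕ)), pw w a :=
        Finset.sum_le_sum_of_subset_of_nonneg hsub fun a _ _ => pw_nonneg hw a
    _ = s1 w R := by
        rw [Finset.sum_image (by intro x _ y _ h; exact Multiset.singleton_inj.1 h)]
        simp [s1]

/-- bound for a set of distinct multisets of size 2 -/
lemma sum_card_two_le (hw : ∀ n, 0 ≤ w n) (R : Finset ℕ) :
    ∀ A : Finset (Multiset ℕ), (∀ a ∈ A, Multiset.card a = 2 ∧ ∀ p ∈ a, p ∈ R) →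
    ∑ a ∈ A, pw w a ≤ H2 w R := by
  induction R using Finset.induction_on with
  | empty =>
      intro A hA
      have : A = ∅ := by
        apply Finset.eq_empty_of_forall_notMem
        intro a ha
        have h2 := (hA a ha).1
        have : a ≠ 0 := by
          intro h; rw [h] at h2; simp at h2
        obtain ⟨p, hp⟩ := Multiset.exists_mem_of_ne_zero this
        exact absurd ((hA a ha).2 p hp) (Finset.notMem_empty p)
      rw [this]
      simp [H2, s1, s2]
  | @insert p R' hp ih =>
      intro A hA
      have hcount : ∀ s ∈ A, s.count p < 3 := fun s hs => by
        have h1 := Multiset.count_le_card p s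
        rw [(hA s hs).1] at h1
        omega
      have hx : 0 ≤ w p := hw p
      have hdec := sum_eq_sum_strat (w := w) A p 3 hcount
      rw [hdec, Finset.sum_range_succ, Finset.sum_range_succ, Finset.sum_range_one]
      have hb0 : ∑ u ∈ strat A p 0, pw w u ≤ H2 w R' := by
        apply ih
        intro u hu
        constructor
        · exact strat_card (fun s hs => (hA s hs).1) hu
        · intro r hr
          have := strat_entries (fun s hs => (hA s hs).2) hu r hr
          rwa [Finset.erase_insert_eq_erase, Finset.erase_eq_of_notMem hp] at this
      have hb1 : ∑ u ∈ strat A p 1, pw w u ≤ s1 w R' := by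
        apply sum_card_one_le hw
        intro u hu
        constructor
        · exact strat_card (fun s hs => (hA s hs).1) hu
        · intro r hr
          have := strat_entries (fun s hs => (hA s hs).2) hu r hr
          rwa [Finset.erase_insert_eq_erase, Finset.erase_eq_of_notMem hp] at this
      have hb2 : ∑ u ∈ strat A p 2, pw w u ≤ 1 := by
        have hsub : strat A p 2 ⊆ {0} := by
          intro u hu
          have := strat_card (fun s hs => (hA s hs).1) hu
          simp only [Finset.mem_singleton]
          rwa [Nat.sub_self, Multiset.card_eq_zero] at this
        calc ∑ u ∈ strat A p 2, pw w u ≤ ∑ u ∈ ({0} : Finset (Multiset ℕ)), pw w u :=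
              Finset.sum_le_sum_of_subset_of_nonneg hsub fun u _ _ => pw_nonneg hw u
          _ = 1 := by simp
      rw [H2_insert hw hp]
      have e0 : w p ^ 0 = 1 := pow_zero _
      have hs1R' : 0 ≤ s1 w R' := s1_nonneg hw R'
      nlinarith [sum_pw_nonneg hw (strat A p 1), sum_pw_nonneg hw (strat A p 2),
        pow_nonneg hx 2, mul_le_mul_of_nonneg_left hb1 hx,
        mul_le_mul_of_nonneg_left hb2 (pow_nonneg hx 2)]

end
end BM
namespace BM
noncomputable section
open scoped Classical
variable {w : ℕ → ℝ}

lemma pair_erase_left (u v : ℕ) : ({u, v} : Multiset ℕ).erase u = {v} := by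
  show (u ::ₘ {v}).erase u = {v}
  rw [Multiset.erase_cons_head]

lemma pair_erase_right (u v : ℕ) : ({u, v} : Multiset ℕ).erase v = {u} := by
  by_cases h : u = v
  · subst h
    exact pair_erase_left u u
  · show (u ::ₘ {v}).erase v = {u}
    rw [Multiset.erase_cons_tail _ h]
    simp

lemma filter_ne_erase (q : ℕ) (s : Multiset ℕ) :
    (s.erase q).filter (· ≠ q) = s.filter (· ≠ q) := by
  ext a
  by_cases h : a = q
  · subst h
    rw [Multiset.count_filter_of_neg (p := fun x => x ≠ a) (by simp),
      Multiset.count_filter_of_neg (p := fun x => x ≠ a) (by simp)]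
  · rw [Multiset.count_filter_of_pos (p := fun x => x ≠ q) h,
      Multiset.count_filter_of_pos (p := fun x => x ≠ q) h,
      Multiset.count_erase_of_ne h]

lemma filter_erase_ne {q p : ℕ} (s : Multiset ℕ) (hpq : p ≠ q) :
    (s.erase p).filter (· ≠ q) = (s.filter (· ≠ q)).erase p := by
  ext a
  by_cases h : a = q
  · subst h
    rw [Multiset.count_filter_of_neg (p := fun x => x ≠ a) (by simp)]
    rw [Multiset.count_erase_of_ne (Ne.symm hpq),
      Multiset.count_filter_of_neg (p := fun x => x ≠ a) (by simp)]
  · by_cases hap : a = p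
    · subst hap
      rw [Multiset.count_erase_self, Multiset.count_filter_of_pos (p := fun x => x ≠ q) h,
        Multiset.count_filter_of_pos (p := fun x => x ≠ q) h, Multiset.count_erase_self]
    · rw [Multiset.count_filter_of_pos (p := fun x => x ≠ q) h,
        Multiset.count_erase_of_ne hap,
        Multiset.count_erase_of_ne hap,
        Multiset.count_filter_of_pos (p := fun x => x ≠ q) h]

/-- closure transfers to strata -/
lemma strat_closure {W U : Finset (Multiset ℕ)} {q : ℕ}
    (hclose : ∀ s ∈ W, ∀ p ∈ s, s.erase p ∈ U) (b : ℕ) :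
    ∀ s' ∈ strat W q b, ∀ p ∈ s', s'.erase p ∈ strat U q b := by
  intro s' hs' p hp
  obtain ⟨s, hs, hcount, rfl⟩ := mem_strat.1 hs'
  rw [Multiset.mem_filter] at hp
  have hpq : p ≠ q := hp.2
  have h1 : s.erase p ∈ U := hclose s hs p hp.1
  have h2 : (s.erase p).count q = b := by
    rw [Multiset.count_erase_of_ne (Ne.symm hpq), hcount]
  exact mem_strat.2 ⟨s.erase p, h1, h2, filter_erase_ne s hpq⟩

end
end BM
namespace BM
noncomputable section
open scoped Classical
variable {w : ℕ → ℝ}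

/-- The key relative-expansion lemma ("Corollary 7 core"). -/
lemma core (hw : ∀ n, 0 ≤ w n) :
    ∀ (N : ℕ) (Q : Finset ℕ), Q.card ≤ N →
    (∀ R ⊆ Q, s1 w R ^ 2 + s2 w R ≤ 2 * s1 w R) →
    ∀ (k : ℕ), 1 ≤ k →
    ∀ (W U : Finset (Multiset ℕ)),
    (∀ s ∈ W, Multiset.card s = k + 1 ∧ ∀ p ∈ s, p ∈ Q) →
    (∀ s ∈ W, ∀ p ∈ s, s.erase p ∈ U) →
    ∑ s ∈ W, pw w s ≤ ∑ u ∈ U, pw w u := by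
  intro N
  induction N with
  | zero =>
      intro Q hQcard _ k hk W U hW _
      have hQ : Q = ∅ := Finset.card_eq_zero.1 (Nat.le_zero.1 hQcard)
      have hWempty : W = ∅ := by
        apply Finset.eq_empty_of_forall_notMem
        intro s hs
        have hc := (hW s hs).1
        have : s ≠ 0 := by
          intro h; rw [h] at hc; simp at hc
        obtain ⟨p, hp⟩ := Multiset.exists_mem_of_ne_zero this
        have := (hW s hs).2 p hp
        rw [hQ] at this
        exact Finset.notMem_empty p this
      rw [hWempty, Finset.sum_empty]
      exact sum_pw_nonneg hw U
  | succ N ihN =>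
      intro Q hQcard hstar k hk W U hW hclose
      rcases Finset.eq_empty_or_nonempty Q with hQ | ⟨q, hq⟩
      · have hWempty : W = ∅ := by
          apply Finset.eq_empty_of_forall_notMem
          intro s hs
          have hc := (hW s hs).1
          have : s ≠ 0 := by
            intro h; rw [h] at hc; simp at hc
          obtain ⟨p, hp⟩ := Multiset.exists_mem_of_ne_zero this
          have := (hW s hs).2 p hp
          rw [hQ] at this
          exact Finset.notMem_empty p this
        rw [hWempty, Finset.sum_empty]
        exact sum_pw_nonneg hw U
      obtain ⟨j, rfl⟩ : ∃ j, k = j + 1 := ⟨k - 1, by omega⟩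
      set x := w q with hxdef
      have hx : 0 ≤ x := hw q
      set Q' := Q.erase q with hQ'def
      have hQ'card : Q'.card ≤ N := by
        rw [hQ'def, Finset.card_erase_of_mem hq]
        omega
      have hQ'sub : Q' ⊆ Q := Finset.erase_subset q Q
      have hstar' : ∀ R ⊆ Q', s1 w R ^ 2 + s2 w R ≤ 2 * s1 w R :=
        fun R hR => hstar R (hR.trans hQ'sub)
      -- abbreviations
      set A : ℕ → ℝ := fun b => ∑ u ∈ strat W q b, pw w u with hAdef
      set B : ℕ → ℝ := fun b => ∑ u ∈ strat U q b, pw w u with hBdef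
      have hA0 : ∀ b, 0 ≤ A b := fun b => sum_pw_nonneg hw _
      have hB0 : ∀ b, 0 ≤ B b := fun b => sum_pw_nonneg hw _
      -- decompose the left side
      have hWsum : ∑ s ∈ W, pw w s = ∑ b ∈ Finset.range (j + 3), x ^ b * A b := by
        apply sum_eq_sum_strat
        intro s hs
        have := Multiset.count_le_card q s
        rw [(hW s hs).1] at this
        omega
      -- decompose (part of) the right side
      have hUsum : ∑ b ∈ Finset.range (j + 2), x ^ b * B b ≤ ∑ u ∈ U, pw w u := by
        set m := (U.sup (fun u => u.count q)) + (j + 3) with hmdef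
        have hcnt : ∀ u ∈ U, u.count q < m := by
          intro u hu
          have h2 : u.count q ≤ U.sup (fun u => u.count q) := Finset.le_sup hu
          omega
        rw [sum_eq_sum_strat U q m hcnt]
        apply Finset.sum_le_sum_of_subset_of_nonneg
        · apply Finset.range_subset_range.2
          omega
        · intro b _ _
          exact mul_nonneg (pow_nonneg hx b) (hB0 b)
      -- strata facts
      have hstratW : ∀ b, ∀ u ∈ strat W q b, Multiset.card u = j + 2 - b ∧ ∀ p ∈ u, p ∈ Q' := by
        intro b u hu
        exact ⟨strat_card (fun s hs => (hW s hs).1) hu,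
          strat_entries (fun s hs => (hW s hs).2) hu⟩
      -- term-by-term comparison for b < j via the inductive hypothesis
      have hIH : ∀ b ∈ Finset.range j, x ^ b * A b ≤ x ^ b * B b := by
        intro b hb
        rw [Finset.mem_range] at hb
        apply mul_le_mul_of_nonneg_left _ (pow_nonneg hx b)
        obtain ⟨c, hc⟩ := Nat.exists_eq_add_of_lt hb
        apply ihN Q' hQ'card hstar' (c + 2) (by omega) (strat W q b) (strat U q b)
        · intro u hu
          refine ⟨?_, (hstratW b u hu).2⟩
          have hcard := (hstratW b u hu).1
          rw [hcard, hc]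
          omega
        · exact strat_closure hclose b
      -- top strata data
      set R : Finset ℕ := (strat W q j).biUnion Multiset.toFinset with hRdef
      set S1f : Finset ℕ := (strat W q (j+1)).biUnion Multiset.toFinset with hS1def
      set T : Finset ℕ := R ∪ S1f with hTdef
      have hRQ' : R ⊆ Q' := by
        intro p hp
        obtain ⟨a, ha, hpa⟩ := Finset.mem_biUnion.1 hp
        exact (hstratW j a ha).2 p (Multiset.mem_toFinset.1 hpa)
      have hS1Q' : S1f ⊆ Q' := by
        intro p hp
        obtain ⟨a, ha, hpa⟩ := Finset.mem_biUnion.1 hp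
        exact (hstratW (j+1) a ha).2 p (Multiset.mem_toFinset.1 hpa)
      have hTQ' : T ⊆ Q' := Finset.union_subset hRQ' hS1Q'
      have hqT : q ∉ T := by
        intro h
        exact (Finset.mem_erase.1 (hTQ' h)).1 rfl
      have hAj : A j ≤ H2 w R := by
        apply sum_card_two_le hw R
        intro a ha
        constructor
        · have := (hstratW j a ha).1
          omega
        · intro p hp
          exact Finset.mem_biUnion.2 ⟨a, ha, Multiset.mem_toFinset.2 hp⟩
      have hAj1 : A (j+1) ≤ s1 w S1f := by
        apply sum_card_one_le hw
        intro a ha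
        constructor
        · have := (hstratW (j+1) a ha).1
          omega
        · intro p hp
          exact Finset.mem_biUnion.2 ⟨a, ha, Multiset.mem_toFinset.2 hp⟩
      have hAj2 : A (j+2) ≤ 1 := by
        have hsub : strat W q (j+2) ⊆ {0} := by
          intro a ha
          have := (hstratW (j+2) a ha).1
          rw [Finset.mem_singleton, ← Multiset.card_eq_zero]
          omega
        calc A (j+2) ≤ ∑ u ∈ ({0} : Finset (Multiset ℕ)), pw w u :=
              Finset.sum_le_sum_of_subset_of_nonneg hsub fun u _ _ => pw_nonneg hw u
          _ = 1 := by simp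
      -- singletons of T occur in level-j stratum of U
      have hsingT : ∀ p ∈ T, ({p} : Multiset ℕ) ∈ strat U q j := by
        intro p hp
        rcases Finset.mem_union.1 hp with hpR | hpS
        · obtain ⟨a, ha, hpa⟩ := Finset.mem_biUnion.1 hpR
          have hpa' : p ∈ a := Multiset.mem_toFinset.1 hpa
          have hcard2 : Multiset.card a = 2 := by
            have := (hstratW j a ha).1
            omega
          obtain ⟨u, v, rfl⟩ := Multiset.card_eq_two.1 hcard2
          obtain ⟨s, hsW, hcnt, hfil⟩ := mem_strat.1 ha
          have hus : u ∈ s := by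
            have : u ∈ Multiset.filter (· ≠ q) s := by
              rw [hfil]; exact Multiset.mem_cons_self u _
            exact Multiset.mem_of_mem_filter this
          have hvs : v ∈ s := by
            have : v ∈ Multiset.filter (· ≠ q) s := by
              rw [hfil]
              exact Multiset.mem_cons.2 (Or.inr (Multiset.mem_singleton_self v))
            exact Multiset.mem_of_mem_filter this
          have huq : u ≠ q := by
            have : u ∈ Multiset.filter (· ≠ q) s := by
              rw [hfil]; exact Multiset.mem_cons_self u _
            exact (Multiset.mem_filter.1 this).2
          have hvq : v ≠ q := by
            have : v ∈ Multiset.filter (· ≠ q) s := by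
              rw [hfil]
              exact Multiset.mem_cons.2 (Or.inr (Multiset.mem_singleton_self v))
            exact (Multiset.mem_filter.1 this).2
          rcases (by simpa using hpa' : p = u ∨ p = v) with rfl | rfl
          · -- erase v
            refine mem_strat.2 ⟨s.erase v, hclose s hsW v hvs, ?_, ?_⟩
            · rw [Multiset.count_erase_of_ne (Ne.symm hvq), hcnt]
            · rw [filter_erase_ne s hvq, hfil, pair_erase_right]
          · -- erase u
            refine mem_strat.2 ⟨s.erase u, hclose s hsW u hus, ?_, ?_⟩
            · rw [Multiset.count_erase_of_ne (Ne.symm huq), hcnt]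
            · rw [filter_erase_ne s huq, hfil, pair_erase_left]
        · obtain ⟨a, ha, hpa⟩ := Finset.mem_biUnion.1 hpS
          have hpa' : p ∈ a := Multiset.mem_toFinset.1 hpa
          obtain ⟨s, hsW, hcnt, hfil⟩ := mem_strat.1 ha
          have hqs : q ∈ s := by
            apply Multiset.count_pos.1
            omega
          refine mem_strat.2 ⟨s.erase q, hclose s hsW q hqs, ?_, ?_⟩
          · rw [Multiset.count_erase_self, hcnt]
            omega
          · rw [filter_ne_erase, hfil]
            have hcard1 : Multiset.card a = 1 := by
              have := (hstratW (j+1) a ha).1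
              omega
            obtain ⟨r, rfl⟩ := Multiset.card_eq_one.1 hcard1
            have : p = r := by simpa using hpa'
            rw [this]
      have hBj : s1 w T ≤ B j := by
        have hsub : T.image (fun p => ({p} : Multiset ℕ)) ⊆ strat U q j := by
          intro a ha
          obtain ⟨p, hp, rfl⟩ := Finset.mem_image.1 ha
          exact hsingT p hp
        calc s1 w T = ∑ a ∈ T.image (fun p => ({p} : Multiset ℕ)), pw w a := by
              rw [Finset.sum_image (by intro y _ z _ h; exact Multiset.singleton_inj.1 h)]
              simp [s1]
          _ ≤ B j := Finset.sum_le_sum_of_subset_of_nonneg hsub fun a _ _ => pw_nonneg hw a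
      -- final assembly
      rw [hWsum]
      refine le_trans ?_ hUsum
      rw [Finset.sum_range_succ, Finset.sum_range_succ, Finset.sum_range_succ,
        Finset.sum_range_succ, Finset.sum_range_succ]
      have hsum1 : ∑ b ∈ Finset.range j, x ^ b * A b ≤ ∑ b ∈ Finset.range j, x ^ b * B b :=
        Finset.sum_le_sum hIH
      have hxj : (0:ℝ) ≤ x ^ j := pow_nonneg hx j
      by_cases hC : strat W q (j+1) = ∅ ∧ strat W q (j+2) = ∅
      · have hA1z : A (j+1) = 0 := by
          simp only [hAdef, hC.1, Finset.sum_empty]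
        have hA2z : A (j+2) = 0 := by
          simp only [hAdef, hC.2, Finset.sum_empty]
        have hAjB : A j ≤ B j := by
          have hH : H2 w R ≤ s1 w R := by
            have := hstar R (hRQ'.trans hQ'sub)
            unfold H2
            linarith
          exact hAj.trans (hH.trans ((s1_mono hw Finset.subset_union_left).trans hBj))
        have h1 : x ^ j * A j ≤ x ^ j * B j := mul_le_mul_of_nonneg_left hAjB hxj
        have h2 : (0:ℝ) ≤ x ^ (j+1) * B (j+1) := mul_nonneg (pow_nonneg hx _) (hB0 _)
        rw [hA1z, hA2z]
        linarith
      · -- nonempty case : 1 ≤ B (j+1)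
        have hB1 : 1 ≤ B (j+1) := by
          have h0mem : (0 : Multiset ℕ) ∈ strat U q (j+1) := by
            rcases Finset.eq_empty_or_nonempty (strat W q (j+1)) with he | ⟨a, ha⟩
            · rcases Finset.eq_empty_or_nonempty (strat W q (j+2)) with he2 | ⟨a, ha⟩
              · exact absurd ⟨he, he2⟩ hC
              · -- a ∈ strat W q (j+2), a = 0
                obtain ⟨s, hsW, hcnt, hfil⟩ := mem_strat.1 ha
                have hqs : q ∈ s := by
                  apply Multiset.count_pos.1
                  omega
                refine mem_strat.2 ⟨s.erase q, hclose s hsW q hqs, ?_, ?_⟩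
                · rw [Multiset.count_erase_self, hcnt]
                  omega
                · rw [filter_ne_erase, hfil]
                  have hcard0 : Multiset.card a = 0 := by
                    have := (hstratW (j+2) a ha).1
                    omega
                  exact Multiset.card_eq_zero.1 hcard0
            · -- a ∈ strat W q (j+1), a = {p}
              have hcard1 : Multiset.card a = 1 := by
                have := (hstratW (j+1) a ha).1
                omega
              obtain ⟨p, rfl⟩ := Multiset.card_eq_one.1 hcard1
              obtain ⟨s, hsW, hcnt, hfil⟩ := mem_strat.1 ha
              have hps : p ∈ s := by
                have : p ∈ Multiset.filter (· ≠ q) s := by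
                  rw [hfil]; exact Multiset.mem_singleton_self p
                exact Multiset.mem_of_mem_filter this
              have hpq : p ≠ q := by
                have : p ∈ Multiset.filter (· ≠ q) s := by
                  rw [hfil]; exact Multiset.mem_singleton_self p
                exact (Multiset.mem_filter.1 this).2
              refine mem_strat.2 ⟨s.erase p, hclose s hsW p hps, ?_, ?_⟩
              · rw [Multiset.count_erase_of_ne (Ne.symm hpq), hcnt]
              · rw [filter_erase_ne s hpq, hfil]
                show ({p} : Multiset ℕ).erase p = 0
                rw [show ({p} : Multiset ℕ) = p ::ₘ 0 from rfl, Multiset.erase_cons_head]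
          calc (1:ℝ) = pw w 0 := pw_zero.symm
            _ ≤ B (j+1) := Finset.single_le_sum (fun u _ => pw_nonneg hw u) h0mem
        have hinsQ : insert q T ⊆ Q := Finset.insert_subset hq (hTQ'.trans hQ'sub)
        have hinner : A j + x * A (j+1) + x^2 * A (j+2) ≤ B j + x * B (j+1) := by
          have e1 : A j ≤ H2 w T := hAj.trans (H2_mono hw Finset.subset_union_left)
          have e2 : x * A (j+1) ≤ x * s1 w T :=
            mul_le_mul_of_nonneg_left (hAj1.trans (s1_mono hw Finset.subset_union_right)) hx
          have e3 : x^2 * A (j+2) ≤ x^2 * 1 :=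
            mul_le_mul_of_nonneg_left hAj2 (pow_nonneg hx 2)
          have e4 : H2 w T + x * s1 w T + x^2 = H2 w (insert q T) := (H2_insert hw hqT).symm
          have e5 : H2 w (insert q T) ≤ s1 w (insert q T) := by
            have := hstar (insert q T) hinsQ
            unfold H2
            linarith
          have e6 : s1 w (insert q T) = x + s1 w T := by
            unfold s1
            rw [Finset.sum_insert hqT]
          have e7 : x ≤ x * B (j+1) := le_mul_of_one_le_right hx hB1
          have e8 : s1 w T ≤ B j := hBj
          linarith
        have hfin : x ^ j * A j + x ^ (j+1) * A (j+1) + x ^ (j+2) * A (j+2)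
            ≤ x ^ j * B j + x ^ (j+1) * B (j+1) := by
          have lhs_eq : x ^ j * A j + x ^ (j+1) * A (j+1) + x ^ (j+2) * A (j+2)
              = x ^ j * (A j + x * A (j+1) + x^2 * A (j+2)) := by
            rw [pow_succ, pow_succ, pow_succ]
            ring
          have rhs_eq : x ^ j * B j + x ^ (j+1) * B (j+1)
              = x ^ j * (B j + x * B (j+1)) := by
            rw [pow_succ]
            ring
          rw [lhs_eq, rhs_eq]
          exact mul_le_mul_of_nonneg_left hinner hxj
        linarith


end
end BM
namespace BM
noncomputable section
open scoped Classical
variable {w : ℕ → ℝ}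

/-- all multisets of size `k` with entries in `Q` -/
def Mk (Q : Finset ℕ) : ℕ → Finset (Multiset ℕ)
  | 0 => {0}
  | (k+1) => Q.biUnion fun p => (Mk Q k).image (fun m => p ::ₘ m)

lemma mem_Mk {Q : Finset ℕ} : ∀ {k : ℕ} {m : Multiset ℕ},
    m ∈ Mk Q k ↔ (Multiset.card m = k ∧ ∀ p ∈ m, p ∈ Q)
  | 0, m => by
      simp only [Mk, Finset.mem_singleton]
      constructor
      · rintro rfl
        simp
      · rintro ⟨hc, -⟩
        exact Multiset.card_eq_zero.1 hc
  | (k+1), m => by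
      simp only [Mk, Finset.mem_biUnion, Finset.mem_image]
      constructor
      · rintro ⟨p, hp, m', hm', rfl⟩
        have := (mem_Mk (k := k) (m := m')).1 hm'
        constructor
        · rw [Multiset.card_cons, this.1]
        · intro r hr
          rcases Multiset.mem_cons.1 hr with rfl | hr'
          · exact hp
          · exact this.2 r hr'
      · rintro ⟨hc, hent⟩
        have hm0 : m ≠ 0 := by
          intro h
          rw [h] at hc
          simp at hc
        obtain ⟨p, hp⟩ := Multiset.exists_mem_of_ne_zero hm0
        refine ⟨p, hent p hp, m.erase p, ?_, Multiset.cons_erase hp⟩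
        apply (mem_Mk (k := k) (m := m.erase p)).2
        constructor
        · rw [Multiset.card_erase_of_mem hp, hc]
          rfl
        · intro r hr
          exact hent r (Multiset.mem_of_mem_erase hr)

/-- elements of `Mk Q k` with no proper divisor in `F` -/
def Tk (F : Finset (Multiset ℕ)) (Q : Finset ℕ) (k : ℕ) : Finset (Multiset ℕ) :=
  (Mk Q k).filter (fun m => ∀ s ∈ F, s ≤ m → s = m)

lemma key_step (hw : ∀ n, 0 ≤ w n) (Q : Finset ℕ)
    (hstar : ∀ R ⊆ Q, s1 w R ^ 2 + s2 w R ≤ 2 * s1 w R)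
    (F : Finset (Multiset ℕ)) (hF : ∀ s ∈ F, ∀ p ∈ s, p ∈ Q)
    (hanti : ∀ s ∈ F, ∀ u ∈ F, s ≤ u → s = u)
    (k : ℕ) (hk : 1 ≤ k) :
    ∑ s ∈ F.filter (fun s => Multiset.card s = k), pw w s
      + ∑ m ∈ Tk F Q (k+1), pw w m ≤ ∑ m ∈ Tk F Q k, pw w m := by
  have hcore : ∑ m ∈ Tk F Q (k+1), pw w m ≤ ∑ m ∈ Tk F Q k \ F, pw w m := by
    apply core hw Q.card Q le_rfl hstar k hk
    · intro s hs
      rw [Tk, Finset.mem_filter] at hs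
      exact ⟨(mem_Mk.1 hs.1).1, (mem_Mk.1 hs.1).2⟩
    · intro m hm p hp
      rw [Tk, Finset.mem_filter] at hm
      have hcm : Multiset.card m = k + 1 := (mem_Mk.1 hm.1).1
      have hcem : Multiset.card (m.erase p) = k := by
        rw [Multiset.card_erase_of_mem hp, hcm]
        rfl
      have hmemMk : m.erase p ∈ Mk Q k := by
        apply mem_Mk.2
        exact ⟨hcem, fun r hr => (mem_Mk.1 hm.1).2 r (Multiset.mem_of_mem_erase hr)⟩
      have hne : ∀ s ∈ F, ¬ s ≤ m.erase p := by
        intro s hsF hle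
        have h1 : s ≤ m := hle.trans (Multiset.erase_le p m)
        have h2 : s = m := hm.2 s hsF h1
        have h3 : Multiset.card s ≤ k := by
          have := Multiset.card_le_card hle
          omega
        rw [h2] at h3
        omega
      rw [Finset.mem_sdiff]
      constructor
      · rw [Tk, Finset.mem_filter]
        exact ⟨hmemMk, fun s hsF hle => absurd hle (hne s hsF)⟩
      · intro hcon
        exact hne _ hcon le_rfl
  have hFk : F.filter (fun s => Multiset.card s = k) ⊆ Tk F Q k := by
    intro s hs
    rw [Finset.mem_filter] at hs
    rw [Tk, Finset.mem_filter]
    exact ⟨mem_Mk.2 ⟨hs.2, hF s hs.1⟩, fun s' hs' hle => hanti s' hs' s hs.1 hle⟩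
  have hdisj : Disjoint (F.filter (fun s => Multiset.card s = k)) (Tk F Q k \ F) := by
    rw [Finset.disjoint_left]
    intro a ha hb
    exact (Finset.mem_sdiff.1 hb).2 (Finset.mem_filter.1 ha).1
  have hcup : F.filter (fun s => Multiset.card s = k) ∪ (Tk F Q k \ F) ⊆ Tk F Q k := by
    apply Finset.union_subset hFk
    intro a ha
    exact (Finset.mem_sdiff.1 ha).1
  calc ∑ s ∈ F.filter (fun s => Multiset.card s = k), pw w s + ∑ m ∈ Tk F Q (k+1), pw w m
      ≤ ∑ s ∈ F.filter (fun s => Multiset.card s = k), pw w s + ∑ m ∈ Tk F Q k \ F, pw w m := by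
        linarith
    _ = ∑ m ∈ (F.filter (fun s => Multiset.card s = k)) ∪ (Tk F Q k \ F), pw w m :=
        (Finset.sum_union hdisj).symm
    _ ≤ ∑ m ∈ Tk F Q k, pw w m :=
        Finset.sum_le_sum_of_subset_of_nonneg hcup fun m _ _ => pw_nonneg hw m

/-- the finitary main theorem -/
theorem fin_main (hw : ∀ n, 0 ≤ w n) (Q : Finset ℕ)
    (hstar : ∀ R ⊆ Q, s1 w R ^ 2 + s2 w R ≤ 2 * s1 w R)
    (F : Finset (Multiset ℕ)) (hF0 : ∀ s ∈ F, s ≠ 0) (hF : ∀ s ∈ F, ∀ p ∈ s, p ∈ Q)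
    (hanti : ∀ s ∈ F, ∀ u ∈ F, s ≤ u → s = u) :
    ∑ s ∈ F, pw w s ≤ s1 w Q := by
  set K := F.sup Multiset.card with hKdef
  have htot : ∑ s ∈ F, pw w s
      = ∑ k ∈ Finset.Icc 1 K, ∑ s ∈ F.filter (fun s => Multiset.card s = k), pw w s := by
    apply (Finset.sum_fiberwise_of_maps_to (g := Multiset.card) ?_ (pw w)).symm
    intro s hs
    rw [Finset.mem_Icc]
    constructor
    · have : s ≠ 0 := hF0 s hs
      have := Multiset.card_pos.2 this
      omega
    · exact Finset.le_sup hs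
  have htel : ∀ j : ℕ,
      (∑ k ∈ Finset.Icc 1 j, ∑ s ∈ F.filter (fun s => Multiset.card s = k), pw w s)
        + ∑ m ∈ Tk F Q (j+1), pw w m ≤ ∑ m ∈ Tk F Q 1, pw w m := by
    intro j
    induction j with
    | zero =>
        rw [show Finset.Icc 1 0 = (∅ : Finset ℕ) from Finset.Icc_eq_empty (by omega),
          Finset.sum_empty, zero_add]
    | succ j ihj =>
        rw [Finset.sum_Icc_succ_top (by omega : 1 ≤ j + 1)]
        have := key_step hw Q hstar F hF hanti (j+1) (by omega)
        linarith
  have hT1 : ∑ m ∈ Tk F Q 1, pw w m ≤ s1 w Q := by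
    apply sum_card_one_le hw
    intro a ha
    rw [Tk, Finset.mem_filter] at ha
    exact ⟨(mem_Mk.1 ha.1).1, (mem_Mk.1 ha.1).2⟩
  have hTK : 0 ≤ ∑ m ∈ Tk F Q (K+1), pw w m := sum_pw_nonneg hw _
  calc ∑ s ∈ F, pw w s
      = ∑ k ∈ Finset.Icc 1 K, ∑ s ∈ F.filter (fun s => Multiset.card s = k), pw w s := htot
    _ ≤ ∑ m ∈ Tk F Q 1, pw w m := by
        have := htel K
        linarith
    _ ≤ s1 w Q := hT1

end
end BM
namespace BM
noncomputable section
open scoped Classical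

lemma finset_sum_le_tsum_subtype (f : ℕ → ℝ) (hf0 : ∀ n, 0 ≤ f n) (hf : Summable f)
    (S : Set ℕ) (R : Finset ℕ) (hR : ∀ p ∈ R, p ∈ S) :
    ∑ p ∈ R, f p ≤ ∑' p : S, f ↑p := by
  have h1 : ∑ p ∈ R, f p = ∑ x ∈ R.subtype (· ∈ S), f ↑x := by
    rw [Finset.sum_subtype_eq_sum_filter, Finset.filter_true_of_mem hR]
  rw [h1]
  exact Summable.sum_le_tsum _ (fun p _ => hf0 _) (hf.subtype _)

lemma star_of_hineq (t : ℝ) (ht : 1 < t)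
    (hineq : ∑' p : {p : ℕ | p.Prime}, (p : ℝ) ^ (-t) ≤
      1 + Real.sqrt (1 - ∑' p : {p : ℕ | p.Prime}, (p : ℝ) ^ (-(2 * t))))
    (R : Finset ℕ) (hR : ∀ p ∈ R, p.Prime) :
    s1 (fun n => (n : ℝ) ^ (-t)) R ^ 2 + s2 (fun n => (n : ℝ) ^ (-t)) R
      ≤ 2 * s1 (fun n => (n : ℝ) ^ (-t)) R := by
  set w : ℕ → ℝ := fun n => (n : ℝ) ^ (-t) with hwdef
  have hw0 : ∀ n, 0 ≤ w n := fun n => Real.rpow_nonneg (Nat.cast_nonneg n) _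
  set a := s1 w R with hadef
  set b := s2 w R with hbdef
  have ha0 : 0 ≤ a := s1_nonneg hw0 R
  rcases le_or_gt a 1 with ha1 | ha1
  · -- small case
    have hb : b ≤ a * a := by
      have h1 : ∀ p ∈ R, (w p) ^ 2 ≤ w p * a := by
        intro p hp
        have h2 : w p ≤ a := Finset.single_le_sum (fun r _ => hw0 r) hp
        nlinarith [hw0 p]
      calc b ≤ ∑ p ∈ R, w p * a := Finset.sum_le_sum h1
        _ = a * a := by rw [← Finset.sum_mul]; rfl
    nlinarith
  · -- large case : compare with the global prime sums
    have hsum1 : Summable (fun n : ℕ => (n : ℝ) ^ (-t)) :=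
      Real.summable_nat_rpow.mpr (by linarith)
    have hsum2 : Summable (fun n : ℕ => (n : ℝ) ^ (-(2*t))) :=
      Real.summable_nat_rpow.mpr (by linarith)
    have hsub1 : Summable (fun p : {p : ℕ | p.Prime} => ((p : ℕ) : ℝ) ^ (-t)) :=
      hsum1.subtype _
    have hsub2 : Summable (fun p : {p : ℕ | p.Prime} => ((p : ℕ) : ℝ) ^ (-(2*t))) :=
      hsum2.subtype _
    have hRfilter : R.filter (fun p => p ∈ {p : ℕ | p.Prime}) = R :=
      Finset.filter_true_of_mem fun p hp => hR p hp
    -- a ≤ π₁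
    have haπ : a ≤ ∑' p : {p : ℕ | p.Prime}, (p : ℝ) ^ (-t) :=
      finset_sum_le_tsum_subtype _ (fun n => Real.rpow_nonneg (Nat.cast_nonneg n) _)
        hsum1 _ R (fun p hp => hR p hp)
    -- b ≤ π₂
    have hbπ : b ≤ ∑' p : {p : ℕ | p.Prime}, (p : ℝ) ^ (-(2*t)) := by
      have hterm : ∀ p ∈ R, (w p) ^ 2 = (p : ℝ) ^ (-(2*t)) := by
        intro p hp
        have hp0 : (0 : ℝ) < (p : ℝ) := by
          exact_mod_cast (hR p hp).pos
        rw [hwdef]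
        simp only []
        rw [sq, ← Real.rpow_add hp0]
        ring_nf
      have h1 : b = ∑ p ∈ R, (p : ℝ) ^ (-(2*t)) := Finset.sum_congr rfl hterm
      rw [h1]
      exact finset_sum_le_tsum_subtype _ (fun n => Real.rpow_nonneg (Nat.cast_nonneg n) _)
        hsum2 _ R (fun p hp => hR p hp)
    set π₂ := ∑' p : {p : ℕ | p.Prime}, (p : ℝ) ^ (-(2*t)) with hπ₂def
    rcases le_or_gt 0 (1 - π₂) with hpos | hneg
    · have hsq : a - 1 ≤ Real.sqrt (1 - π₂) := by linarith
      have h2 : (a - 1) ^ 2 ≤ (Real.sqrt (1 - π₂)) ^ 2 :=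
        pow_le_pow_left₀ (by linarith) hsq 2
      rw [Real.sq_sqrt hpos] at h2
      nlinarith
    · have hz : Real.sqrt (1 - π₂) = 0 := Real.sqrt_eq_zero'.2 (by linarith)
      rw [hz] at hineq
      linarith
end
end BM
namespace BM
noncomputable section
open scoped Classical

lemma list_prod_rpow (t : ℝ) : ∀ l : List ℕ,
    ((l.prod : ℕ) : ℝ) ^ (-t) = (l.map (fun p : ℕ => (p : ℝ) ^ (-t))).prod
  | [] => by simp [Real.one_rpow]
  | (p :: l) => by
      rw [List.prod_cons, List.map_cons, List.prod_cons, Nat.cast_mul,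
        Real.mul_rpow (Nat.cast_nonneg p) (Nat.cast_nonneg _), list_prod_rpow t l]

lemma pw_primeFactorsList (t : ℝ) {n : ℕ} (hn : n ≠ 0) :
    pw (fun m => (m : ℝ) ^ (-t)) (n.primeFactorsList : Multiset ℕ) = (n : ℝ) ^ (-t) := by
  have h1 : pw (fun m => (m : ℝ) ^ (-t)) (n.primeFactorsList : Multiset ℕ)
      = (n.primeFactorsList.map (fun p : ℕ => (p : ℝ) ^ (-t))).prod := by
    simp [pw]
  rw [h1, ← list_prod_rpow t, Nat.prod_primeFactorsList hn]

end
end BM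



/-- **Corollary 7 (Banks–Martin).** If `t > 1` satisfies
`∑_{p prime} p^{-t} ≤ 1 + (1 - ∑_{p prime} p^{-2t})^{1/2}`, then every set of primes `P`
is `t`-best among primitive subsets of `ℕ(P)`. -/
theorem every_prime_set_t_best (t : ℝ) (ht : 1 < t)
    (hineq : ∑' p : {p : ℕ | p.Prime}, (p : ℝ) ^ (-t) ≤
      1 + Real.sqrt (1 - ∑' p : {p : ℕ | p.Prime}, (p : ℝ) ^ (-(2 * t))))
    (P : Set ℕ) (hP : ∀ p ∈ P, Nat.Prime p)
    (S : Set ℕ) (hS : S ⊆ NSet P) (hprim : Primitive S) :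
    ∑' n : S, (n : ℝ) ^ (-t) ≤ ∑' p : P, (p : ℝ) ^ (-t) := by
  classical
  set w : ℕ → ℝ := fun n => (n : ℝ) ^ (-t) with hwdef
  have hw0 : ∀ n : ℕ, 0 ≤ w n := fun n => Real.rpow_nonneg (Nat.cast_nonneg n) _
  have hsum1 : Summable w := Real.summable_nat_rpow.mpr (by linarith)
  have h1S : (1 : ℕ) ∉ S := by
    intro h1
    apply hprim.2.1
    exact Set.eq_singleton_iff_unique_mem.2
      ⟨h1, fun b hb => (hprim.2.2 1 h1 b hb (one_dvd b)).symm⟩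
  have hSpos : ∀ n ∈ S, 0 < n := fun n hn => (hS hn).1
  have hsumS : Summable (fun n : S => w ↑n) := hsum1.subtype S
  apply Summable.tsum_le_of_sum_le hsumS
  intro fs
  set F' : Finset ℕ := fs.image Subtype.val with hF'def
  have hF'S : ∀ n ∈ F', n ∈ S := by
    intro n hn
    obtain ⟨x, _, rfl⟩ := Finset.mem_image.1 hn
    exact x.2
  have hF'pos : ∀ n ∈ F', n ≠ 0 := fun n hn => (hSpos n (hF'S n hn)).ne'
  have hF'ne1 : ∀ n ∈ F', n ≠ 1 := by
    intro n hn h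
    rw [h] at hn
    exact h1S (hF'S 1 hn)
  set Q : Finset ℕ := F'.biUnion Nat.primeFactors with hQdef
  set F : Finset (Multiset ℕ) := F'.image (fun n => (n.primeFactorsList : Multiset ℕ))
    with hFdef
  have hprodF : ∀ n ∈ F', ((n.primeFactorsList : Multiset ℕ)).prod = n := by
    intro n hn
    rw [Multiset.prod_coe]
    exact Nat.prod_primeFactorsList (hF'pos n hn)
  have hinj : ∀ n ∈ F', ∀ m ∈ F', (n.primeFactorsList : Multiset ℕ)
      = (m.primeFactorsList : Multiset ℕ) → n = m := by
    intro n hn m hm h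
    have := congrArg Multiset.prod h
    rwa [hprodF n hn, hprodF m hm] at this
  have step1 : ∑ i ∈ fs, w ↑i = ∑ n ∈ F', w n := by
    rw [hF'def, Finset.sum_image (fun x _ y _ h => Subtype.ext h)]
  have step2 : ∑ n ∈ F', w n = ∑ s ∈ F, BM.pw w s := by
    rw [hFdef, Finset.sum_image hinj]
    apply Finset.sum_congr rfl
    intro n hn
    exact (BM.pw_primeFactorsList t (hF'pos n hn)).symm
  have hQprime : ∀ p ∈ Q, p.Prime := by
    intro p hp
    obtain ⟨n, _, hpn⟩ := Finset.mem_biUnion.1 hp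
    exact Nat.prime_of_mem_primeFactors hpn
  have hstar : ∀ R ⊆ Q, BM.s1 w R ^ 2 + BM.s2 w R ≤ 2 * BM.s1 w R := by
    intro R hR
    exact BM.star_of_hineq t ht hineq R (fun p hp => hQprime p (hR hp))
  have hmain : ∑ s ∈ F, BM.pw w s ≤ BM.s1 w Q := by
    apply BM.fin_main hw0 Q hstar F
    · -- nonzero
      intro s hs
      obtain ⟨n, hn, rfl⟩ := Finset.mem_image.1 hs
      intro h0
      have : n = 1 := by
        have := hprodF n hn
        rw [h0] at this
        simpa using this.symm
      exact hF'ne1 n hn this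
    · -- entries
      intro s hs p hp
      obtain ⟨n, hn, rfl⟩ := Finset.mem_image.1 hs
      apply Finset.mem_biUnion.2 ⟨n, hn, ?_⟩
      have hp' : p ∈ n.primeFactorsList := by
        simpa using hp
      exact Nat.mem_primeFactors.2
        ⟨Nat.prime_of_mem_primeFactorsList hp', Nat.dvd_of_mem_primeFactorsList hp',
          hF'pos n hn⟩
    · -- antichain
      intro s hs u hu hle
      obtain ⟨n, hn, rfl⟩ := Finset.mem_image.1 hs
      obtain ⟨m, hm, rfl⟩ := Finset.mem_image.1 hu
      have hdvd : n ∣ m := by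
        have := Multiset.prod_dvd_prod_of_le hle
        rwa [hprodF n hn, hprodF m hm] at this
      have : n = m := hprim.2.2 n (hF'S n hn) m (hF'S m hm) hdvd
      rw [this]
  have hQP : ∀ p ∈ Q, p ∈ P := by
    intro p hp
    obtain ⟨n, hn, hpn⟩ := Finset.mem_biUnion.1 hp
    exact (hS (hF'S n hn)).2 p (Nat.prime_of_mem_primeFactors hpn)
      (Nat.dvd_of_mem_primeFactors hpn)
  have hlast : BM.s1 w Q ≤ ∑' p : P, w ↑p :=
    BM.finset_sum_le_tsum_subtype w hw0 hsum1 P Q hQP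
  calc ∑ i ∈ fs, w ↑i = ∑ s ∈ F, BM.pw w s := step1.trans step2
    _ ≤ BM.s1 w Q := hmain
    _ ≤ ∑' p : P, w ↑p := hlast
end

section
/- Let t > 1 be a real number and let 𝒫 be a finite set of primes. Suppose that (i) for every proper subset 𝒬 ⊊ 𝒫 and every natural number k ≥ 1, the primitive set ℕ_k(𝒬) is t-best among all primitive subsets of ℕ_{≥k}(𝒬); and (ii) the inequality ∑_{n∈ℕ_k(𝒫)} n^{−t} ≥ ∑_{n∈ℕ_{k+1}(𝒫)} n^{−t} holds for all natural numbers k ≥ 1. Then for every natural number k ≥ 1, the set ℕ_k(𝒫) is t-best among all primitive subsets of ℕ_{≥k}(𝒫). -/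
section Aux

variable {t : ℝ}

lemma sumf (ht : 1 < t) : Summable (fun n : ℕ => (n : ℝ) ^ (-t)) :=
  Real.summable_nat_rpow.mpr (by linarith)

lemma term_nonneg (n : ℕ) : 0 ≤ ((n : ℕ) : ℝ) ^ (-t) :=
  Real.rpow_nonneg (Nat.cast_nonneg n) _

lemma tsumf_nonneg (S : Set ℕ) : 0 ≤ ∑' n : S, (n : ℝ) ^ (-t) :=
  tsum_nonneg fun n => term_nonneg _

lemma tsumf_congr {S T : Set ℕ} (h : S = T) :
    ∑' n : S, (n : ℝ) ^ (-t) = ∑' n : T, (n : ℝ) ^ (-t) := by rw [h]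

lemma tsumf_mono (ht : 1 < t) {S T : Set ℕ} (h : S ⊆ T) :
    ∑' n : S, (n : ℝ) ^ (-t) ≤ ∑' n : T, (n : ℝ) ^ (-t) := by
  rw [tsum_subtype S (fun n : ℕ => (n : ℝ) ^ (-t)),
    tsum_subtype T (fun n : ℕ => (n : ℝ) ^ (-t))]
  exact Summable.tsum_le_tsum
    (fun n => Set.indicator_le_indicator_of_subset h (fun a => term_nonneg a) n)
    ((sumf ht).indicator S) ((sumf ht).indicator T)

lemma tsumf_union (ht : 1 < t) {S T : Set ℕ} (h : Disjoint S T) :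
    ∑' n : ↥(S ∪ T), (n : ℝ) ^ (-t)
      = ∑' n : S, (n : ℝ) ^ (-t) + ∑' n : T, (n : ℝ) ^ (-t) :=
  Summable.tsum_union_disjoint h ((sumf ht).subtype S) ((sumf ht).subtype T)

lemma tsumf_image (ht : 1 < t) {q : ℕ} (hq : q ≠ 0) (T : Set ℕ) :
    ∑' n : ↥((fun m => q * m) '' T), (n : ℝ) ^ (-t)
      = (q : ℝ) ^ (-t) * ∑' n : T, (n : ℝ) ^ (-t) := by
  rw [tsum_image (fun n : ℕ => (n : ℝ) ^ (-t))
    ((mul_right_injective₀ hq).injOn)]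
  rw [← tsum_mul_left]
  refine tsum_congr fun m => ?_
  push_cast
  exact Real.mul_rpow (by positivity) (by positivity)

lemma tsumf_split (ht : 1 < t) {q : ℕ} (hq : q ≠ 0) (T : Set ℕ) :
    ∑' n : T, (n : ℝ) ^ (-t)
      = ∑' n : ↥{n ∈ T | ¬ q ∣ n}, (n : ℝ) ^ (-t)
        + (q : ℝ) ^ (-t) * ∑' n : ↥{m : ℕ | q * m ∈ T}, (n : ℝ) ^ (-t) := by
  have hset : {n ∈ T | q ∣ n} = (fun m => q * m) '' {m : ℕ | q * m ∈ T} := by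
    ext n
    constructor
    · rintro ⟨hn, c, rfl⟩
      exact ⟨c, hn, rfl⟩
    · rintro ⟨c, hc, rfl⟩
      exact ⟨hc, Dvd.intro c rfl⟩
  have hT : T = {n ∈ T | ¬ q ∣ n} ∪ {n ∈ T | q ∣ n} := by
    ext n
    constructor
    · intro hn
      by_cases h : q ∣ n
      · exact Or.inr ⟨hn, h⟩
      · exact Or.inl ⟨hn, h⟩
    · rintro (⟨hn, -⟩ | ⟨hn, -⟩) <;> exact hn
  have hdisj : Disjoint {n ∈ T | ¬ q ∣ n} {n ∈ T | q ∣ n} :=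
    Set.disjoint_left.mpr fun n h1 h2 => h1.2 h2.2
  calc ∑' n : T, (n : ℝ) ^ (-t)
      = ∑' n : ↥({n ∈ T | ¬ q ∣ n} ∪ {n ∈ T | q ∣ n}), (n : ℝ) ^ (-t) := tsumf_congr hT
    _ = _ := by
        rw [tsumf_union ht hdisj, tsumf_congr hset, tsumf_image ht hq]

lemma omega_mul {q m : ℕ} (hq : q.Prime) (hm : m ≠ 0) :
    (q * m).primeFactorsList.length = m.primeFactorsList.length + 1 := by
  rw [(Nat.perm_primeFactorsList_mul hq.ne_zero hm).length_eq, List.length_append,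
    Nat.primeFactorsList_prime hq]
  simp [Nat.add_comm]

lemma prime_of_len_one {n : ℕ} (hn : n ≠ 0) (h : n.primeFactorsList.length = 1) :
    n.Prime := by
  obtain ⟨p, hp⟩ := List.length_eq_one_iff.mp h
  have hpp : p.Prime := Nat.prime_of_mem_primeFactorsList
    (by rw [hp]; exact List.mem_singleton_self p)
  have hprod := Nat.prod_primeFactorsList hn
  rw [hp, List.prod_singleton] at hprod
  exact hprod ▸ hpp

lemma one_not_mem {P : Set ℕ} {k : ℕ} (hk : 1 ≤ k) {S : Set ℕ} (hS : S ⊆ NgeSet P k) :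
    1 ∉ S := by
  intro h
  obtain ⟨-, hlen⟩ := hS h
  rw [Nat.primeFactorsList_one] at hlen
  simp at hlen
  omega

lemma primitive_subset {S T : Set ℕ} (hp : Primitive S) (h1 : 1 ∉ T) (hT : T ⊆ S)
    (hne : T.Nonempty) : Primitive T :=
  ⟨hne, fun he => h1 (he ▸ rfl), fun a ha b hb hd => hp.2.2 a (hT ha) b (hT hb) hd⟩

lemma mem_NkSet_one {P : Finset ℕ} {x : ℕ} (hx : x ∈ NkSet ↑P 1) : x.Prime ∧ x ∈ P := by
  obtain ⟨⟨hpos, hfac⟩, hlen⟩ := hx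
  have hp := prime_of_len_one hpos.ne' hlen
  exact ⟨hp, Finset.mem_coe.mp (hfac x hp dvd_rfl)⟩

lemma sep_not_dvd_NkSet {P : Finset ℕ} (hP : ∀ p ∈ P, p.Prime) {q : ℕ} (hq : q ∈ P)
    (k : ℕ) : {n ∈ NkSet ↑P k | ¬ q ∣ n} = NkSet ↑(P.erase q) k := by
  ext n
  constructor
  · rintro ⟨⟨⟨hn0, hfac⟩, hlen⟩, hnd⟩
    refine ⟨⟨hn0, fun p pp pd => ?_⟩, hlen⟩
    exact Finset.mem_coe.mpr (Finset.mem_erase.mpr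
      ⟨fun hpq => hnd (hpq ▸ pd), Finset.mem_coe.mp (hfac p pp pd)⟩)
  · rintro ⟨⟨hn0, hfac⟩, hlen⟩
    refine ⟨⟨⟨hn0, fun p pp pd => ?_⟩, hlen⟩, fun hd => ?_⟩
    · exact Finset.mem_coe.mpr (Finset.mem_of_mem_erase (Finset.mem_coe.mp (hfac p pp pd)))
    · exact (Finset.mem_erase.mp (Finset.mem_coe.mp (hfac q (hP q hq) hd))).1 rfl

lemma preimage_mul_NkSet {P : Finset ℕ} (hP : ∀ p ∈ P, p.Prime) {q : ℕ} (hq : q ∈ P)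
    (k : ℕ) : {m : ℕ | q * m ∈ NkSet ↑P (k + 1)} = NkSet ↑P k := by
  have hqp := hP q hq
  ext m
  constructor
  · rintro ⟨⟨hpos, hfac⟩, hlen⟩
    have hm0 : m ≠ 0 := by
      rintro rfl
      simp at hpos
    refine ⟨⟨Nat.pos_of_ne_zero hm0, fun p pp pd => hfac p pp (pd.mul_left q)⟩, ?_⟩
    rw [omega_mul hqp hm0] at hlen
    omega
  · rintro ⟨⟨hpos, hfac⟩, hlen⟩
    refine ⟨⟨Nat.mul_pos hqp.pos hpos, fun p pp pd => ?_⟩, ?_⟩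
    · rcases (Nat.Prime.dvd_mul pp).mp pd with h | h
      · rw [(Nat.prime_dvd_prime_iff_eq pp hqp).mp h]
        exact Finset.mem_coe.mpr hq
      · exact hfac p pp h
    · rw [omega_mul hqp hpos.ne', hlen]

lemma NkSet_mono {P P' : Set ℕ} (h : P ⊆ P') (k : ℕ) : NkSet P k ⊆ NkSet P' k :=
  fun n hn => ⟨⟨hn.1.1, fun p pp pd => h (hn.1.2 p pp pd)⟩, hn.2⟩

end Aux

lemma key_lemma (t : ℝ) (ht : 1 < t) (P : Finset ℕ)
    (hP : ∀ p ∈ P, Nat.Prime p)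
    (h1 : ∀ Q : Finset ℕ, Q ⊂ P → ∀ k : ℕ, 1 ≤ k →
      ∀ S : Set ℕ, S ⊆ NgeSet ↑Q k → Primitive S →
        ∑' n : S, (n : ℝ) ^ (-t) ≤ ∑' n : NkSet ↑Q k, (n : ℝ) ^ (-t))
    (h2 : ∀ k : ℕ, 1 ≤ k →
      ∑' n : NkSet ↑P (k + 1), (n : ℝ) ^ (-t) ≤ ∑' n : NkSet ↑P k, (n : ℝ) ^ (-t)) :
    ∀ μ : ℕ, ∀ k B : ℕ, 1 ≤ k → 2 * B ≤ μ + k →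
      ∀ S : Set ℕ, S ⊆ NgeSet ↑P k → (∀ n ∈ S, n.primeFactorsList.length ≤ B) →
      Primitive S → ∑' n : S, (n : ℝ) ^ (-t) ≤ ∑' n : NkSet ↑P k, (n : ℝ) ^ (-t) := by
  intro μ
  induction μ using Nat.strong_induction_on with
  | _ μ IH =>
  intro k B hk hμ S hS hB hprim
  classical
  obtain ⟨x, hx⟩ := hprim.1
  obtain ⟨⟨hxpos, hxfac⟩, hxlen⟩ := hS hx
  have hkB : k ≤ B := le_trans hxlen (hB x hx)
  have hμ1 : 1 ≤ μ := by omega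
  have h1S : (1 : ℕ) ∉ S := one_not_mem hk hS
  rcases Nat.lt_or_ge k 2 with hk1 | hk2
  · -- case k = 1
    have hk1' : k = 1 := by omega
    subst hk1'
    have hXsub : S ∩ NkSet ↑P 1 ⊆ S := Set.inter_subset_left
    set X : Set ℕ := S ∩ NkSet ↑P 1 with hX
    set Y : Set ℕ := S \ X with hY
    have hSXY : X ∪ Y = S := Set.union_diff_cancel hXsub
    have hdisj : Disjoint X Y := Set.disjoint_sdiff_right
    have hfS : ∑' n : S, (n : ℝ) ^ (-t)
        = ∑' n : X, (n : ℝ) ^ (-t) + ∑' n : Y, (n : ℝ) ^ (-t) := by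
      rw [← tsumf_congr hSXY, tsumf_union ht hdisj]
    by_cases hYe : Y = ∅
    · -- all of S at level 1
      have hsub : S ⊆ NkSet ↑P 1 := fun n hn => (Set.diff_eq_empty.mp hYe hn).2
      exact tsumf_mono ht hsub
    · by_cases hXe : X = ∅
      · -- S ⊆ NgeSet P 2
        have hS2 : S ⊆ NgeSet ↑P 2 := by
          intro n hn
          obtain ⟨hnN, hnlen⟩ := hS hn
          refine ⟨hnN, ?_⟩
          rcases Nat.lt_or_ge n.primeFactorsList.length 2 with h | h
          · have hlen1 : n.primeFactorsList.length = 1 := by omega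
            have : n ∈ X := ⟨hn, hnN, hlen1⟩
            rw [hXe] at this
            exact absurd this (Set.notMem_empty n)
          · exact h
        have hrec := IH (μ - 1) (by omega) 2 B (by omega) (by omega) S hS2 hB hprim
        exact hrec.trans (h2 1 le_rfl)
      · -- X and Y both nonempty
        obtain ⟨x0, hx0⟩ := Set.nonempty_iff_ne_empty.mpr hXe
        have hx0P := mem_NkSet_one hx0.2
        set Q' : Finset ℕ := P.filter (fun p => p ∉ X) with hQ'
        have hQ'P : Q' ⊆ P := Finset.filter_subset _ _
        have hQ'sub : Q' ⊂ P := by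
          refine (Finset.ssubset_iff_of_subset hQ'P).mpr
            ⟨x0, hx0P.2, fun hmem => ?_⟩
          exact (Finset.mem_filter.mp hmem).2 hx0
        have hYsub : Y ⊆ NgeSet ↑Q' 1 := by
          intro y hy
          obtain ⟨⟨hypos, hyfac⟩, hylen⟩ := hS hy.1
          refine ⟨⟨hypos, fun p pp pd => ?_⟩, hylen⟩
          refine Finset.mem_coe.mpr (Finset.mem_filter.mpr
            ⟨Finset.mem_coe.mp (hyfac p pp pd), fun hpX => ?_⟩)
          have hpy : p = y := hprim.2.2 p (hXsub hpX) y hy.1 pd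
          exact hy.2 (hpy ▸ hpX)
        have hYprim : Primitive Y := primitive_subset hprim
          (fun h1Y => h1S (Set.diff_subset h1Y)) Set.diff_subset
          (Set.nonempty_iff_ne_empty.mpr hYe)
        have hfY := h1 Q' hQ'sub 1 le_rfl Y hYsub hYprim
        have hdisj2 : Disjoint X (NkSet ↑Q' 1) := by
          refine Set.disjoint_left.mpr fun n hnX hnQ => ?_
          have hn := mem_NkSet_one hnQ
          exact (Finset.mem_filter.mp hn.2).2 hnX
        have hsub2 : X ∪ NkSet ↑Q' 1 ⊆ NkSet ↑P 1 := by
          refine Set.union_subset (fun n hn => hn.2) ?_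
          exact NkSet_mono (fun p hp => Finset.mem_coe.mpr (hQ'P (Finset.mem_coe.mp hp))) 1
        calc ∑' n : S, (n : ℝ) ^ (-t)
            = ∑' n : X, (n : ℝ) ^ (-t) + ∑' n : Y, (n : ℝ) ^ (-t) := hfS
          _ ≤ ∑' n : X, (n : ℝ) ^ (-t) + ∑' n : NkSet ↑Q' 1, (n : ℝ) ^ (-t) := by
              exact add_le_add le_rfl hfY
          _ = ∑' n : ↥(X ∪ NkSet ↑Q' 1), (n : ℝ) ^ (-t) := (tsumf_union ht hdisj2).symm
          _ ≤ ∑' n : NkSet ↑P 1, (n : ℝ) ^ (-t) := tsumf_mono ht hsub2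
  · -- case k ≥ 2
    obtain ⟨j, rfl⟩ : ∃ j, k = j + 1 := ⟨k - 1, by omega⟩
    have hj : 1 ≤ j := by omega
    have hx1 : x ≠ 1 := by
      rintro rfl
      rw [Nat.primeFactorsList_one] at hxlen
      simp at hxlen
    obtain ⟨q, hqp, hqd⟩ := Nat.exists_prime_and_dvd hx1
    have hqP : q ∈ P := Finset.mem_coe.mp (hxfac q hqp hqd)
    have hq0 : q ≠ 0 := hqp.ne_zero
    -- the two pieces of S
    set S0 : Set ℕ := {n ∈ S | ¬ q ∣ n} with hS0def
    set S1 : Set ℕ := {m : ℕ | q * m ∈ S} with hS1def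
    have hfsplit : ∑' n : S, (n : ℝ) ^ (-t)
        = ∑' n : S0, (n : ℝ) ^ (-t) + (q : ℝ) ^ (-t) * ∑' n : S1, (n : ℝ) ^ (-t) :=
      tsumf_split ht hq0 S
    have hdk : ∑' n : NkSet ↑P (j + 1), (n : ℝ) ^ (-t)
        = ∑' n : NkSet ↑(P.erase q) (j + 1), (n : ℝ) ^ (-t)
          + (q : ℝ) ^ (-t) * ∑' n : NkSet ↑P j, (n : ℝ) ^ (-t) := by
      rw [tsumf_split ht hq0 (NkSet ↑P (j + 1)),
        tsumf_congr (sep_not_dvd_NkSet hP hqP (j + 1)),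
        tsumf_congr (preimage_mul_NkSet hP hqP j)]
    -- bound for S0
    have hbound0 : ∑' n : S0, (n : ℝ) ^ (-t)
        ≤ ∑' n : NkSet ↑(P.erase q) (j + 1), (n : ℝ) ^ (-t) := by
      by_cases hS0e : S0 = ∅
      · rw [tsumf_congr hS0e]
        simpa using tsumf_nonneg (t := t) (NkSet ↑(P.erase q) (j + 1))
      · have hsub : S0 ⊆ NgeSet ↑(P.erase q) (j + 1) := by
          intro n hn
          obtain ⟨⟨hnpos, hnfac⟩, hnlen⟩ := hS hn.1
          refine ⟨⟨hnpos, fun p pp pd => ?_⟩, hnlen⟩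
          exact Finset.mem_coe.mpr (Finset.mem_erase.mpr
            ⟨fun hpq => hn.2 (hpq ▸ pd), Finset.mem_coe.mp (hnfac p pp pd)⟩)
        have hprim0 : Primitive S0 := primitive_subset hprim
          (fun h10 => h1S h10.1) (fun n hn => hn.1)
          (Set.nonempty_iff_ne_empty.mpr hS0e)
        exact h1 (P.erase q) (Finset.erase_ssubset hqP) (j + 1) (by omega) S0 hsub hprim0
    -- bound for S1
    have hbound1 : ∑' n : S1, (n : ℝ) ^ (-t) ≤ ∑' n : NkSet ↑P j, (n : ℝ) ^ (-t) := by
      by_cases hS1e : S1 = ∅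
      · rw [tsumf_congr hS1e]
        simpa using tsumf_nonneg (t := t) (NkSet ↑P j)
      · have hsub : S1 ⊆ NgeSet ↑P j := by
          intro m hm
          obtain ⟨⟨hmpos, hmfac⟩, hmlen⟩ := hS hm
          have hm0 : m ≠ 0 := by
            rintro rfl
            simp at hmpos
          refine ⟨⟨Nat.pos_of_ne_zero hm0, fun p pp pd => hmfac p pp (pd.mul_left q)⟩, ?_⟩
          rw [omega_mul hqp hm0] at hmlen
          omega
        have hBsub : ∀ m ∈ S1, m.primeFactorsList.length ≤ B - 1 := by
          intro m hm
          have hmB := hB _ hm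
          obtain ⟨⟨hmpos, -⟩, -⟩ := hS hm
          have hm0 : m ≠ 0 := by
            rintro rfl
            simp at hmpos
          rw [omega_mul hqp hm0] at hmB
          omega
        have h1S1 : (1 : ℕ) ∉ S1 := by
          intro hmem
          have : q * 1 ∈ S := hmem
          rw [mul_one] at this
          obtain ⟨-, hlen⟩ := hS this
          rw [Nat.primeFactorsList_prime hqp] at hlen
          simp at hlen
          omega
        have hprim1 : Primitive S1 := by
          refine ⟨Set.nonempty_iff_ne_empty.mpr hS1e, fun he => h1S1 (he ▸ rfl), ?_⟩
          intro a ha b hb hab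
          have : q * a = q * b := hprim.2.2 (q * a) ha (q * b) hb
            (mul_dvd_mul_left q hab)
          exact Nat.eq_of_mul_eq_mul_left hqp.pos this
        exact IH (μ - 1) (by omega) j (B - 1) hj (by omega) S1 hsub hBsub hprim1
    rw [hfsplit, hdk]
    have hqt : (0 : ℝ) ≤ (q : ℝ) ^ (-t) := term_nonneg q
    exact add_le_add hbound0 (mul_le_mul_of_nonneg_left hbound1 hqt)

/-- **Lemma 9 (Banks–Martin).** Let `t > 1` and let `P` be a finite set of primes such
that (i) for every proper subset `Q ⊊ P` and every `k ≥ 1`, `ℕ_k(Q)` is `t`-best among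
primitive subsets of `ℕ_{≥k}(Q)`, and (ii) `∑_{n∈ℕ_k(P)} n^{-t} ≥ ∑_{n∈ℕ_{k+1}(P)} n^{-t}`
for all `k ≥ 1`. Then `ℕ_k(P)` is `t`-best among primitive subsets of `ℕ_{≥k}(P)` for
every `k ≥ 1`. -/
theorem induction_step_t_best (t : ℝ) (ht : 1 < t) (P : Finset ℕ)
    (hP : ∀ p ∈ P, Nat.Prime p)
    (h1 : ∀ Q : Finset ℕ, Q ⊂ P → ∀ k : ℕ, 1 ≤ k →
      ∀ S : Set ℕ, S ⊆ NgeSet ↑Q k → Primitive S →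
        ∑' n : S, (n : ℝ) ^ (-t) ≤ ∑' n : NkSet ↑Q k, (n : ℝ) ^ (-t))
    (h2 : ∀ k : ℕ, 1 ≤ k →
      ∑' n : NkSet ↑P (k + 1), (n : ℝ) ^ (-t) ≤ ∑' n : NkSet ↑P k, (n : ℝ) ^ (-t))
    (k : ℕ) (hk : 1 ≤ k)
    (S : Set ℕ) (hS : S ⊆ NgeSet ↑P k) (hprim : Primitive S) :
    ∑' n : S, (n : ℝ) ^ (-t) ≤ ∑' n : NkSet ↑P k, (n : ℝ) ^ (-t) := by
  classical
  have hsummable : Summable ((fun n : ℕ => (n : ℝ) ^ (-t)) ∘ (Subtype.val : S → ℕ)) :=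
    (sumf ht).subtype S
  refine Summable.tsum_le_of_sum_le hsummable ?_
  intro F
  by_cases hF : F = ∅
  · subst hF
    simpa using tsumf_nonneg (t := t) (NkSet ↑P k)
  · set F' : Finset ℕ := F.image Subtype.val with hF'
    have hFne : F.Nonempty := Finset.nonempty_of_ne_empty hF
    have hF'ne : F'.Nonempty := by rw [hF']; exact hFne.image _
    have hsum_eq : ∑ i ∈ F, ((fun n : ℕ => (n : ℝ) ^ (-t)) ∘ Subtype.val) i
        = ∑' n : (↑F' : Set ℕ), (n : ℝ) ^ (-t) := by
      rw [Finset.tsum_subtype' F' (fun n : ℕ => (n : ℝ) ^ (-t))]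
      rw [hF', Finset.sum_image (fun a _ b _ h => Subtype.ext h)]
      rfl
    have hF'S : (↑F' : Set ℕ) ⊆ S := by
      intro n hn
      obtain ⟨i, -, rfl⟩ := Finset.mem_image.mp (Finset.mem_coe.mp hn)
      exact i.2
    set B : ℕ := F'.sup (fun n => n.primeFactorsList.length) with hBdef
    have hBle : ∀ n ∈ (↑F' : Set ℕ), n.primeFactorsList.length ≤ B := by
      intro n hn
      rw [hBdef]
      exact Finset.le_sup (f := fun n : ℕ => n.primeFactorsList.length)
        (Finset.mem_coe.mp hn)
    have hprimF : Primitive (↑F' : Set ℕ) := primitive_subset hprim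
      (fun h1F => one_not_mem hk hS (hF'S h1F)) hF'S
      ⟨hF'ne.choose, Finset.mem_coe.mpr hF'ne.choose_spec⟩
    have := key_lemma t ht P hP h1 h2 (2 * B) k B hk (by omega) (↑F' : Set ℕ)
      (fun n hn => hS (hF'S hn)) hBle hprimF
    calc ∑ i ∈ F, ((fun n : ℕ => (n : ℝ) ^ (-t)) ∘ Subtype.val) i
        = ∑' n : (↑F' : Set ℕ), (n : ℝ) ^ (-t) := hsum_eq
      _ ≤ ∑' n : NkSet ↑P k, (n : ℝ) ^ (-t) := this
end

section
/- Let m ≥ 1 and let (x₁,…,x_m) be an m-tuple of nonnegative real numbers. If h₁(x₁,…,x_m) ≥ h₂(x₁,…,x_m), then h_k(x₁,…,x_m) ≥ h_{k+1}(x₁,…,x_m) for every natural number k ≥ 1. -/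
set_option maxHeartbeats 1000000


/-- `hpoly m k x` is the complete homogeneous symmetric polynomial
`h_k(x₁,…,x_m) = ∑_{1 ≤ j₁ ≤ ⋯ ≤ j_k ≤ m} x_{j₁} ⋯ x_{j_k}`, the sum being over all
nondecreasing `k`-tuples of indices (equivalently, all multisets of size `k`). -/
noncomputable def hpoly (m k : ℕ) (x : Fin m → ℝ) : ℝ :=
  ∑ f : {f : Fin k → Fin m // Monotone f}, ∏ i : Fin k, x (f.1 i)

namespace HpolyAux

def toSym {m k : ℕ} (f : {f : Fin k → Fin m // Monotone f}) : Sym (Fin m) k :=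
  ⟨(List.ofFn f.1 : List (Fin m)), by simp⟩

lemma hpoly_eq_sym (m k : ℕ) (x : Fin m → ℝ) :
    hpoly m k x = ∑ s : Sym (Fin m) k, ((s.1).map x).prod := by
  rw [hpoly]
  refine Fintype.sum_bijective toSym ⟨?_, ?_⟩ _ _ ?_
  · intro f g h
    have h1 : ((List.ofFn f.1 : List (Fin m)) : Multiset (Fin m)) = (List.ofFn g.1 : List (Fin m)) :=
      congrArg Subtype.val h
    have h2 := List.Perm.eq_of_sortedLE
      (List.sortedLE_ofFn_iff.mpr f.2) (List.sortedLE_ofFn_iff.mpr g.2) (Multiset.coe_eq_coe.mp h1)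
    exact Subtype.ext (List.ofFn_injective h2)
  · rintro ⟨M, hM⟩
    set l := Multiset.sort M (· ≤ ·) with hl
    have hlen : l.length = k := by rw [hl, Multiset.length_sort, hM]
    have hsort : l.Pairwise (· ≤ ·) := Multiset.pairwise_sort _ _
    refine ⟨⟨fun i => l.get (Fin.cast hlen.symm i), ?_⟩, ?_⟩
    · exact hsort.sortedLE.monotone_get.comp (fun i j hij => by exact hij)
    · apply Subtype.ext
      show ((List.ofFn _ : List (Fin m)) : Multiset (Fin m)) = M
      have h3 : List.ofFn (fun i : Fin k => l.get (Fin.cast hlen.symm i)) = l :=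
        (List.ofFn_congr hlen l.get).symm.trans (List.ofFn_get l)
      rw [h3, hl, Multiset.sort_eq]
  · intro f
    show ∏ i : Fin k, x (f.1 i) = (((List.ofFn f.1 : List (Fin m)) : Multiset (Fin m)).map x).prod
    rw [Multiset.map_coe, Multiset.prod_coe, List.map_ofFn, List.prod_ofFn]
    rfl

lemma hpoly_one (m : ℕ) (x : Fin m → ℝ) : hpoly m 1 x = ∑ j, x j := by
  rw [hpoly]
  refine Fintype.sum_bijective (fun f : {f : Fin 1 → Fin m // Monotone f} => f.1 0) ⟨?_, ?_⟩ _ _ ?_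
  · intro f g h
    refine Subtype.ext (funext fun i => ?_)
    have : i = 0 := Subsingleton.elim _ _
    rw [this]; exact h
  · intro j; exact ⟨⟨fun _ => j, monotone_const⟩, rfl⟩
  · intro f; simp

lemma hpoly_nonneg (m k : ℕ) (x : Fin m → ℝ) (hx : ∀ i, 0 ≤ x i) : 0 ≤ hpoly m k x := by
  rw [hpoly]
  exact Finset.sum_nonneg fun f _ => Finset.prod_nonneg fun i _ => hx _

section MinStuff

variable {α : Type*} [LinearOrder α] [Inhabited α]

/-- The minimum of a multiset (junk value on the empty multiset). -/
def mmin (M : Multiset α) : α := (Multiset.sort M (· ≤ ·)).headI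

lemma mmin_mem {M : Multiset α} (h : M ≠ 0) : mmin M ∈ M := by
  rw [← Multiset.mem_sort (r := (· ≤ ·)) (s := M)]
  show (Multiset.sort M (· ≤ ·)).headI ∈ _
  cases hl : Multiset.sort M (· ≤ ·) with
  | nil =>
    exfalso; apply h
    rw [← Multiset.sort_eq M (· ≤ ·), hl]; rfl
  | cons c t => simp

lemma mmin_le {M : Multiset α} {b : α} (hb : b ∈ M) : mmin M ≤ b := by
  rw [← Multiset.mem_sort (r := (· ≤ ·)) (s := M)] at hb
  have hs := Multiset.pairwise_sort M (· ≤ ·)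
  show (Multiset.sort M (· ≤ ·)).headI ≤ b
  cases hl : Multiset.sort M (· ≤ ·) with
  | nil => rw [hl] at hb; simp at hb
  | cons c t =>
    rw [hl] at hb hs
    rcases List.mem_cons.mp hb with rfl | hbt
    · exact le_refl _
    · exact (List.pairwise_cons.mp hs).1 b hbt

/-- The 2-element sub-multiset extracted from `M` given a marked element `j`. -/
def qpair (M : Multiset α) (j : α) : Multiset α :=
  if j = mmin M then
    (if 2 ≤ M.count (mmin M) then {mmin M, mmin M}
     else {mmin (M.erase (mmin M)),
           mmin ((M.erase (mmin M)).erase (mmin (M.erase (mmin M))))})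
  else {mmin M, j}

lemma qpair_card (M : Multiset α) (j : α) : Multiset.card (qpair M j) = 2 := by
  unfold qpair; split_ifs <;> simp

lemma qpair_le {M : Multiset α} {j : α} (h3 : 3 ≤ Multiset.card M) (hj : j ∈ M) :
    qpair M j ≤ M := by
  have hM0 : M ≠ 0 := by rintro rfl; simp at hj
  unfold qpair
  split_ifs with h1 h2
  · have h : Multiset.replicate 2 (mmin M) ≤ M := Multiset.le_count_iff_replicate_le.mp h2
    simpa [Multiset.replicate_succ] using h
  · set N := M.erase (mmin M) with hN
    have hNcard : Multiset.card N = Multiset.card M - 1 := by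
      rw [hN, Multiset.card_erase_of_mem (mmin_mem hM0)]; rfl
    have hN0 : N ≠ 0 := by
      intro h0
      rw [h0] at hNcard; simp at hNcard; omega
    have hbN : mmin N ∈ N := mmin_mem hN0
    have hNe0 : N.erase (mmin N) ≠ 0 := by
      intro h0
      have := Multiset.card_erase_of_mem hbN
      rw [h0] at this; simp at this; omega
    have hc : mmin (N.erase (mmin N)) ∈ N.erase (mmin N) := mmin_mem hNe0
    have h5 : ({mmin N, mmin (N.erase (mmin N))} : Multiset α) ≤ mmin N ::ₘ N.erase (mmin N) := by
      rw [Multiset.insert_eq_cons]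
      exact Multiset.cons_le_cons _ (Multiset.singleton_le.mpr hc)
    rw [Multiset.cons_erase hbN] at h5
    exact h5.trans (Multiset.erase_le _ _)
  · have hjN : j ∈ M.erase (mmin M) := (Multiset.mem_erase_of_ne h1).mpr hj
    have h5 : ({mmin M, j} : Multiset α) ≤ mmin M ::ₘ M.erase (mmin M) := by
      rw [Multiset.insert_eq_cons]
      exact Multiset.cons_le_cons _ (Multiset.singleton_le.mpr hjN)
    rwa [Multiset.cons_erase (mmin_mem hM0)] at h5

lemma count_qpair_ne {M : Multiset α} {j : α} (h1 : j ≠ mmin M) :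
    Multiset.count (mmin M) (qpair M j) = 1 := by
  unfold qpair
  rw [if_neg h1]
  simp [Multiset.count_cons, Multiset.count_singleton, (Ne.symm h1)]

lemma count_qpair_self {M : Multiset α} (h3 : 3 ≤ Multiset.card M) (hM : mmin M ∈ M) :
    Multiset.count (mmin M) (qpair M (mmin M)) ≠ 1 := by
  unfold qpair
  rw [if_pos rfl]
  split_ifs with h2
  · simp [Multiset.count_cons, Multiset.count_singleton]
  · have hcnt : Multiset.count (mmin M) M = 1 := by
      have := Multiset.one_le_count_iff_mem.mpr hM
      omega
    set N := M.erase (mmin M) with hN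
    have hNcard : Multiset.card N = Multiset.card M - 1 := by
      rw [hN, Multiset.card_erase_of_mem hM]; rfl
    have hN0 : N ≠ 0 := by
      intro h0; rw [h0] at hNcard; simp at hNcard; omega
    have hnotin : mmin M ∉ N := by
      rw [← Multiset.count_pos, hN, Multiset.count_erase_self, hcnt]
      simp
    have hbN : mmin N ∈ N := mmin_mem hN0
    have hb : mmin N ≠ mmin M := fun h => hnotin (h ▸ hbN)
    have hNe0 : N.erase (mmin N) ≠ 0 := by
      intro h0
      have h6 := Multiset.card_erase_of_mem hbN
      rw [h0] at h6; simp at h6; omega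
    have hcmem : mmin (N.erase (mmin N)) ∈ N :=
      Multiset.mem_of_le (Multiset.erase_le _ _) (mmin_mem hNe0)
    have hcne : mmin (N.erase (mmin N)) ≠ mmin M := fun h => hnotin (h ▸ hcmem)
    simp [Multiset.count_cons, Multiset.count_singleton, Ne.symm hb, Ne.symm hcne]

lemma qpair_inj {M : Multiset α} {j j' : α} (h3 : 3 ≤ Multiset.card M)
    (hj : j ∈ M) (hj' : j' ∈ M) (h : qpair M j = qpair M j') : j = j' := by
  have hM0 : M ≠ 0 := by rintro rfl; simp at hj
  have hM : mmin M ∈ M := mmin_mem hM0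
  by_cases e1 : j = mmin M <;> by_cases e2 : j' = mmin M
  · rw [e1, e2]
  · subst e1
    exact absurd (by rw [h]; exact count_qpair_ne e2) (count_qpair_self h3 hM)
  · subst e2
    exact absurd (by rw [← h]; exact count_qpair_ne e1) (count_qpair_self h3 hM)
  · unfold qpair at h
    rw [if_neg e1, if_neg e2] at h
    have hjmem : j ∈ ({mmin M, j'} : Multiset α) := by rw [← h]; simp
    rcases (by simpa using hjmem : j = mmin M ∨ j = j') with h4 | h4
    · exact absurd h4 e1
    · exact h4

end MinStuff

lemma key (m k : ℕ) (hm : 1 ≤ m) (hk : 1 ≤ k) (x : Fin m → ℝ) (hx : ∀ i, 0 ≤ x i) :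
    (∑ s : Sym (Fin m) (k+1), ((s.1).map x).prod) * (∑ j : Fin m, x j) ≤
    (∑ s : Sym (Fin m) k, ((s.1).map x).prod) * (∑ p : Sym (Fin m) 2, ((p.1).map x).prod) := by
  haveI : Inhabited (Fin m) := ⟨⟨0, hm⟩⟩
  have hcard : ∀ (s : Sym (Fin m) (k+1)) (j : Fin m), Multiset.card (j ::ₘ s.1) = k + 2 := by
    intro s j; rw [Multiset.card_cons, s.2]
  have h3 : ∀ (s : Sym (Fin m) (k+1)) (j : Fin m), 3 ≤ Multiset.card (j ::ₘ s.1) := by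
    intro s j; rw [hcard]; omega
  have hqle : ∀ (s : Sym (Fin m) (k+1)) (j : Fin m), qpair (j ::ₘ s.1) j ≤ j ::ₘ s.1 :=
    fun s j => qpair_le (h3 s j) (Multiset.mem_cons_self _ _)
  let Φ : Sym (Fin m) (k+1) × Fin m → Sym (Fin m) k × Sym (Fin m) 2 := fun sj =>
    (⟨(sj.2 ::ₘ sj.1.1) - qpair (sj.2 ::ₘ sj.1.1) sj.2, by
        rw [Multiset.card_sub (hqle _ _), hcard, qpair_card]; omega⟩,
     ⟨qpair (sj.2 ::ₘ sj.1.1) sj.2, qpair_card _ _⟩)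
  have hΦinj : Function.Injective Φ := by
    rintro ⟨s, j⟩ ⟨s', j'⟩ h
    have h2 : qpair (j ::ₘ s.1) j = qpair (j' ::ₘ s'.1) j' := congrArg (fun r => r.2.1) h
    have h1 : (j ::ₘ s.1) - qpair (j ::ₘ s.1) j = (j' ::ₘ s'.1) - qpair (j' ::ₘ s'.1) j' :=
      congrArg (fun r => r.1.1) h
    have hMM : (j ::ₘ s.1) = (j' ::ₘ s'.1) := by
      have e1 := tsub_add_cancel_of_le (hqle s j)
      have e2 := tsub_add_cancel_of_le (hqle s' j')
      rw [← e1, ← e2, h1, h2]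
    have hjj : j = j' := by
      refine qpair_inj (h3 s j) (Multiset.mem_cons_self _ _)
        (hMM ▸ Multiset.mem_cons_self j' s'.1) ?_
      rw [h2, hMM]
    subst hjj
    have hss : s = s' := Subtype.ext (by rwa [Multiset.cons_inj_right] at hMM)
    rw [hss]
  have LHSeq : (∑ s : Sym (Fin m) (k+1), ((s.1).map x).prod) * (∑ j : Fin m, x j)
      = ∑ p : Sym (Fin m) (k+1) × Fin m, ((p.1.1).map x).prod * x p.2 := by
    rw [Finset.sum_mul_sum]
    exact (Fintype.sum_prod_type
      (fun p : Sym (Fin m) (k+1) × Fin m => ((p.1.1).map x).prod * x p.2)).symm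
  have RHSeq : (∑ s : Sym (Fin m) k, ((s.1).map x).prod) * (∑ p : Sym (Fin m) 2, ((p.1).map x).prod)
      = ∑ r : Sym (Fin m) k × Sym (Fin m) 2, ((r.1.1).map x).prod * ((r.2.1).map x).prod := by
    rw [Finset.sum_mul_sum]
    exact (Fintype.sum_prod_type
      (fun r : Sym (Fin m) k × Sym (Fin m) 2 => ((r.1.1).map x).prod * ((r.2.1).map x).prod)).symm
  rw [LHSeq, RHSeq]
  have hnn : ∀ (N : Multiset (Fin m)), 0 ≤ (N.map x).prod := by
    intro N
    refine Multiset.prod_nonneg fun a ha => ?_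
    obtain ⟨i, _, rfl⟩ := Multiset.mem_map.mp ha
    exact hx i
  have hterm : ∀ p : Sym (Fin m) (k+1) × Fin m,
      ((p.1.1).map x).prod * x p.2 = (((Φ p).1.1).map x).prod * (((Φ p).2.1).map x).prod := by
    rintro ⟨s, j⟩
    have e1 : ((j ::ₘ s.1) - qpair (j ::ₘ s.1) j) + qpair (j ::ₘ s.1) j = j ::ₘ s.1 :=
      tsub_add_cancel_of_le (hqle s j)
    have e2 : (((j ::ₘ s.1) - qpair (j ::ₘ s.1) j).map x).prod * ((qpair (j ::ₘ s.1) j).map x).prod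
        = ((j ::ₘ s.1).map x).prod := by
      rw [← Multiset.prod_add, ← Multiset.map_add, e1]
    show ((s.1).map x).prod * x j = _
    rw [show ((Φ (s, j)).1.1) = (j ::ₘ s.1) - qpair (j ::ₘ s.1) j from rfl,
      show ((Φ (s, j)).2.1) = qpair (j ::ₘ s.1) j from rfl, e2,
      Multiset.map_cons, Multiset.prod_cons, mul_comm]
  calc ∑ p : Sym (Fin m) (k+1) × Fin m, ((p.1.1).map x).prod * x p.2
      = ∑ p : Sym (Fin m) (k+1) × Fin m, (((Φ p).1.1).map x).prod * (((Φ p).2.1).map x).prod :=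
        Finset.sum_congr rfl fun p _ => hterm p
    _ = ∑ r ∈ Finset.univ.image Φ, ((r.1.1).map x).prod * ((r.2.1).map x).prod :=
        (Finset.sum_image
          (f := fun r : Sym (Fin m) k × Sym (Fin m) 2 => ((r.1.1).map x).prod * ((r.2.1).map x).prod)
          (g := Φ) (s := Finset.univ) fun a _ b _ hab => hΦinj hab).symm
    _ ≤ ∑ r : Sym (Fin m) k × Sym (Fin m) 2, ((r.1.1).map x).prod * ((r.2.1).map x).prod :=
        Finset.sum_le_sum_of_subset_of_nonneg (Finset.subset_univ _)
          (fun r _ _ => mul_nonneg (hnn _) (hnn _))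


end HpolyAux

/-- **Lemma 10 (Banks–Martin).** If `x₁,…,x_m ≥ 0` and `h₁(x) ≥ h₂(x)`, then
`h_k(x) ≥ h_{k+1}(x)` for every `k ≥ 1`. -/
theorem hpoly_decreasing (m : ℕ) (hm : 1 ≤ m) (x : Fin m → ℝ) (hx : ∀ i, 0 ≤ x i)
    (h12 : hpoly m 2 x ≤ hpoly m 1 x) (k : ℕ) (hk : 1 ≤ k) :
    hpoly m (k + 1) x ≤ hpoly m k x := by
  classical
  by_cases hz : ∑ j, x j = 0
  · have hx0 : ∀ j, x j = 0 := fun j =>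
      (Finset.sum_eq_zero_iff_of_nonneg (fun i _ => hx i)).mp hz j (Finset.mem_univ j)
    have h0 : hpoly m (k + 1) x = 0 := by
      rw [hpoly]
      exact Finset.sum_eq_zero fun f _ =>
        Finset.prod_eq_zero (Finset.mem_univ (0 : Fin (k + 1))) (hx0 _)
    rw [h0]
    exact HpolyAux.hpoly_nonneg m k x hx
  · have hpos : 0 < ∑ j, x j :=
      lt_of_le_of_ne (Finset.sum_nonneg fun i _ => hx i) (Ne.symm hz)
    have hkey := HpolyAux.key m k hm hk x hx
    have h2' : (∑ p : Sym (Fin m) 2, ((p.1).map x).prod) ≤ ∑ j, x j := by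
      rw [← HpolyAux.hpoly_eq_sym, ← HpolyAux.hpoly_one]
      exact h12
    have hknn : 0 ≤ ∑ s : Sym (Fin m) k, ((s.1).map x).prod := by
      rw [← HpolyAux.hpoly_eq_sym]
      exact HpolyAux.hpoly_nonneg m k x hx
    rw [HpolyAux.hpoly_eq_sym m (k + 1), HpolyAux.hpoly_eq_sym m k]
    refine le_of_mul_le_mul_right ?_ hpos
    exact hkey.trans (mul_le_mul_of_nonneg_left h2' hknn)
end
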